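/- arXiv:0806.0103 — 3 statements merged into one kernel-verified Lean document; each statement's English description precedes it below -/
import Mathlib

section
/- Every 1-coloured (i.e., all elements have colour 0) σ-structure A satisfies ucw(A) ≤ pw(G_A) + 2, where G_A is the Gaifman graph of A and pw denotes path-width. -/
/-- A relational signature: a type of relation symbols with arities. -/
structure Signature where
  symbols : Type
  ar : symbols → ℕ

/-- A coloured σ-structure: a carrier, interpretations of the relation
symbols, and a colouring of the elements by natural numbers. -/
structure CStruc (σ : Signature) where
  carrier : Type
  rel : ∀ R : σ.symbols, (Fin (σ.ar R) → carrier) → Prop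
  col : carrier → ℕ

/-- Isomorphism of coloured structures. -/
structure CIso {σ : Signature} (A B : CStruc σ) where
  toEquiv : A.carrier ≃ B.carrier
  rel_iff : ∀ (R : σ.symbols) (t : Fin (σ.ar R) → A.carrier),
    A.rel R t ↔ B.rel R fun i => toEquiv (t i)
  col_eq : ∀ a, B.col (toEquiv a) = A.col a

/-- Disjoint union of coloured structures. -/
def CStruc.union {σ : Signature} (A B : CStruc σ) : CStruc σ where
  carrier := A.carrier ⊕ B.carrier
  rel R t := (∃ s, (∀ i, t i = Sum.inl (s i)) ∧ A.rel R s) ∨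
             (∃ s, (∀ i, t i = Sum.inr (s i)) ∧ B.rel R s)
  col := Sum.elim A.col B.col

/-- Recolouring of a coloured structure. -/
def CStruc.recolor {σ : Signature} (A : CStruc σ) (f : ℕ → ℕ) : CStruc σ where
  carrier := A.carrier
  rel := A.rel
  col := f ∘ A.col

/-- Introduce into the relation `R` all tuples whose colours match `c`. -/
def CStruc.introduce {σ : Signature} (A : CStruc σ) (R : σ.symbols)
    (c : Fin (σ.ar R) → ℕ) : CStruc σ where
  carrier := A.carrier
  rel S t := A.rel S t ∨ ∃ h : S = R, ∀ i : Fin (σ.ar R),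
    A.col (t (Fin.cast (congrArg σ.ar h).symm i)) = c i
  col := A.col

/-- The class UCW_k[σ]: coloured structures of unary clique-width at most `k`,
generated from empty structures and relation-free singletons of colour 0 by
disjoint union, recolouring (by functions on the colours `< k`), and
introduction of a relation along a tuple of colours, closed under isomorphism. -/
inductive UCW (σ : Signature) (k : ℕ) : CStruc σ → Prop where
  | empty (A : CStruc σ) (h : IsEmpty A.carrier) : UCW σ k A
  | single (hk : 0 < k) (A : CStruc σ) (hsub : ∀ a b : A.carrier, a = b)
      (hne : Nonempty A.carrier)
      (hrel : ∀ (R : σ.symbols) (t : Fin (σ.ar R) → A.carrier), ¬ A.rel R t)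
      (hcol : ∀ a, A.col a = 0) : UCW σ k A
  | union {A B : CStruc σ} : UCW σ k A → UCW σ k B → UCW σ k (A.union B)
  | recolor {A : CStruc σ} (f : ℕ → ℕ) (hf : ∀ i, i < k → f i < k) :
      UCW σ k A → UCW σ k (A.recolor f)
  | introduce {A : CStruc σ} (R : σ.symbols) (c : Fin (σ.ar R) → ℕ)
      (hc : ∀ i, c i < k) : UCW σ k A → UCW σ k (A.introduce R c)
  | iso {A B : CStruc σ} (e : CIso A B) : UCW σ k A → UCW σ k B

/-- Unary clique-width: the least `k` such that the structure is in UCW_k[σ]. -/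
noncomputable def ucw {σ : Signature} (A : CStruc σ) : ℕ := sInf {k | UCW σ k A}

/-- The Gaifman graph of a structure: distinct elements are adjacent iff they
occur together in some tuple of some relation. -/
def CStruc.gaifman {σ : Signature} (A : CStruc σ) : SimpleGraph A.carrier where
  Adj a b := a ≠ b ∧ ∃ (R : σ.symbols) (u : Fin (σ.ar R) → A.carrier),
    A.rel R u ∧ (∃ i, u i = a) ∧ (∃ j, u j = b)
  symm := by
    refine ⟨?_⟩
    rintro a b ⟨hne, R, u, hu, hi, hj⟩
    exact ⟨hne.symm, R, u, hu, hj, hi⟩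
  loopless := by refine ⟨?_⟩; rintro a ⟨hne, -⟩; exact hne rfl

/-- A path decomposition of `G` with `n` bags. -/
structure PathDecomp {V : Type} (G : SimpleGraph V) (n : ℕ) where
  bag : Fin n → Set V
  mem_bag : ∀ v, ∃ i, v ∈ bag i
  mem_edge : ∀ u v, G.Adj u v → ∃ i, u ∈ bag i ∧ v ∈ bag i
  interval : ∀ (v : V) (i j m : Fin n), i ≤ m → m ≤ j →
    v ∈ bag i → v ∈ bag j → v ∈ bag m

/-- `G` has path-width at most `w`. -/
def pwLe {V : Type} (G : SimpleGraph V) (w : ℕ) : Prop :=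
  ∃ n, ∃ P : PathDecomp G n, ∀ i, (P.bag i).ncard ≤ w + 1

/-- The path-width of `G`. -/
noncomputable def pw {V : Type} (G : SimpleGraph V) : ℕ := sInf {w | pwLe G w}

----------------------------------------------------------------------
-- Auxiliary development
----------------------------------------------------------------------


variable {σ : Signature}

/-- Add a finite set of colour patterns at once. -/
def addT (X : CStruc σ) (T : Set ((R : σ.symbols) × (Fin (σ.ar R) → ℕ))) : CStruc σ where
  carrier := X.carrier
  rel S t := X.rel S t ∨ ∃ p ∈ T, ∃ h : S = p.1, ∀ i : Fin (σ.ar p.1),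
    X.col (t (Fin.cast (congrArg σ.ar h).symm i)) = p.2 i
  col := X.col

lemma ucw_addT {k : ℕ} {X : CStruc σ} (hX : UCW σ k X)
    {T : Set ((R : σ.symbols) × (Fin (σ.ar R) → ℕ))} (hT : T.Finite)
    (hc : ∀ p ∈ T, ∀ i, p.2 i < k) : UCW σ k (addT X T) := by
  revert hc
  refine Set.Finite.induction_on T hT
    (motive := fun T _ => (∀ p ∈ T, ∀ i, p.2 i < k) → UCW σ k (addT X T)) ?_ ?_
  · intro _
    refine UCW.iso (A := X) ⟨Equiv.refl _, fun R t => ?_, fun a => rfl⟩ hX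
    show X.rel R t ↔ X.rel R _ ∨ _
    simp [addT]
    exact Iff.rfl
  · rintro p T hp hTfin IH hc
    have h1 : UCW σ k ((addT X T).introduce p.1 p.2) :=
      UCW.introduce _ _ (hc p (Set.mem_insert _ _))
        (IH (fun q hq i => hc q (Set.mem_insert_of_mem _ hq) i))
    refine UCW.iso (A := (addT X T).introduce p.1 p.2)
      ⟨Equiv.refl _, fun R t => ?_, fun a => rfl⟩ h1
    show ((X.rel R t ∨ _) ∨ _) ↔ (X.rel R t ∨ _)
    constructor
    · rintro ((h | ⟨q, hq, hh⟩) | hh)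
      · exact Or.inl h
      · exact Or.inr ⟨q, Set.mem_insert_of_mem _ hq, hh⟩
      · exact Or.inr ⟨p, Set.mem_insert _ _, hh⟩
    · rintro (h | ⟨q, hq, hh⟩)
      · exact Or.inl (Or.inl h)
      · rcases hq with rfl | hq
        · exact Or.inr hh
        · exact Or.inl (Or.inr ⟨q, hq, hh⟩)

/-- Any finite relation-free structure with small colours is in UCW. -/
lemma ucw_discrete {k : ℕ} (hk : 0 < k) :
    ∀ (m : ℕ) (B : CStruc σ), Nat.card B.carrier = m → Finite B.carrier →
    (∀ R t, ¬ B.rel R t) → (∀ a, B.col a < k) → UCW σ k B := by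
  intro m
  induction m using Nat.strong_induction_on with
  | _ m IH =>
    intro B hm hfin hrel hcol
    rcases Nat.eq_zero_or_pos m with rfl | hpos
    · refine UCW.empty B ?_
      rw [Nat.card_eq_zero] at hm
      rcases hm with h | h
      · exact h
      · exact absurd h (by rwa [not_infinite_iff_finite])
    · have hne : Nonempty B.carrier := (Nat.card_pos_iff.mp (hm ▸ hpos)).1
      obtain ⟨a⟩ := hne
      classical
      set B' : CStruc σ :=
        ⟨{b : B.carrier // ¬ b = a}, fun _ _ => False, fun b => B.col b.1⟩ with hB'def
      set e0 : {b : B.carrier // b = a} ⊕ {b : B.carrier // ¬ b = a} ≃ B.carrier :=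
        Equiv.sumCompl (fun b => b = a) with he0
      haveI : Unique {b : B.carrier // b = a} :=
        ⟨⟨⟨a, rfl⟩⟩, by rintro ⟨b, rfl⟩; rfl⟩
      have hcard : Nat.card {b : B.carrier // ¬ b = a} < m := by
        have h2 := Nat.card_congr e0
        rw [Nat.card_sum, Nat.card_unique, hm] at h2
        omega
      have hB' : UCW σ k B' :=
        IH _ hcard B' rfl inferInstance (fun _ _ h => h) (fun b => hcol b.1)
      set S0 : CStruc σ :=
        ⟨{b : B.carrier // b = a}, fun _ _ => False, fun _ => 0⟩ with hS0def
      have hS0 : UCW σ k S0 :=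
        UCW.single hk S0 (fun x y => Subtype.ext (x.2.trans y.2.symm))
          ⟨⟨a, rfl⟩⟩ (fun _ _ h => h) (fun _ => rfl)
      have hS1 : UCW σ k (S0.recolor fun _ => B.col a) :=
        UCW.recolor _ (fun _ _ => hcol a) hS0
      refine UCW.iso (A := (S0.recolor fun _ => B.col a).union B')
        ⟨e0, fun R t => ?_, ?_⟩ (UCW.union hS1 hB')
      · constructor
        · rintro (⟨s, _, h⟩ | ⟨s, _, h⟩) <;> exact h.elim
        · intro h; exact absurd h (hrel R _)
      · rintro (⟨b, hb⟩ | ⟨b, hb⟩)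
        · show B.col (e0 (Sum.inl ⟨b, hb⟩)) = B.col a
          rw [he0, Equiv.sumCompl_apply_inl]
          show B.col b = B.col a
          rw [hb]
        · show B.col (e0 (Sum.inr ⟨b, hb⟩)) = B.col b
          rw [he0, Equiv.sumCompl_apply_inr]


/-- The positive-arity relation symbols realized in a structure. -/
def activeSet (B : CStruc σ) : Set σ.symbols :=
  {R | 0 < σ.ar R ∧ ∃ t, B.rel R t}

lemma active_finite {k : ℕ} {B : CStruc σ} (h : UCW σ k B) :
    (activeSet B).Finite := by
  induction h with
  | empty A hA =>
    have : activeSet A = ∅ := by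
      rw [Set.eq_empty_iff_forall_notMem]
      rintro R ⟨har, t, -⟩
      exact hA.false (t ⟨0, har⟩)
    rw [this]; exact Set.finite_empty
  | single hk A hsub hne hrel hcol =>
    have : activeSet A = ∅ := by
      rw [Set.eq_empty_iff_forall_notMem]
      rintro R ⟨har, t, ht⟩
      exact hrel R t ht
    rw [this]; exact Set.finite_empty
  | union hA hB ihA ihB =>
    refine (ihA.union ihB).subset ?_
    rintro R ⟨har, t, (⟨s, -, hs⟩ | ⟨s, -, hs⟩)⟩
    · exact Or.inl ⟨har, s, hs⟩
    · exact Or.inr ⟨har, s, hs⟩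
  | recolor f hf h ih =>
    refine ih.subset ?_
    rintro R ⟨har, t, ht⟩
    exact ⟨har, t, ht⟩
  | introduce R c hc h ih =>
    refine (ih.insert R).subset ?_
    rintro S ⟨har, t, (ht | ⟨hh, -⟩)⟩
    · exact Set.mem_insert_of_mem _ ⟨har, t, ht⟩
    · exact hh ▸ Set.mem_insert _ _
  | iso e h ih =>
    refine ih.subset ?_
    rintro R ⟨har, t, ht⟩
    refine ⟨har, fun i => e.toEquiv.symm (t i), (e.rel_iff R _).mpr ?_⟩
    simpa using ht

section Main

variable (A : CStruc σ) {n : ℕ} (P : PathDecomp A.gaifman n)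

/-- The bags, reindexed over ℕ (empty beyond `n`). -/
def bg (j : ℕ) : Set A.carrier := if h : j < n then P.bag ⟨j, h⟩ else ∅

lemma bg_lt {v : A.carrier} {j : ℕ} (h : v ∈ bg A P j) : j < n := by
  by_contra hn
  rw [bg, dif_neg hn] at h
  exact h

lemma bg_interval {v : A.carrier} {j1 j2 j3 : ℕ} (h12 : j1 ≤ j2) (h23 : j2 ≤ j3)
    (h1 : v ∈ bg A P j1) (h3 : v ∈ bg A P j3) : v ∈ bg A P j2 := by
  have hn3 : j3 < n := bg_lt A P h3
  have hn2 : j2 < n := lt_of_le_of_lt h23 hn3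
  have hn1 : j1 < n := lt_of_le_of_lt h12 hn2
  rw [bg, dif_pos hn1] at h1
  rw [bg, dif_pos hn3] at h3
  rw [bg, dif_pos hn2]
  exact P.interval v ⟨j1, hn1⟩ ⟨j3, hn3⟩ ⟨j2, hn2⟩ h12 h23 h1 h3

lemma bg_of_bag {v : A.carrier} (i : Fin n) (h : v ∈ P.bag i) : v ∈ bg A P i.1 := by
  rw [bg, dif_pos i.isLt]
  convert h using 2

/-- Every realized tuple fits into some bag. -/
lemma tuple_fits {R : σ.symbols} {u : Fin (σ.ar R) → A.carrier}
    (hu : A.rel R u) (har : 0 < σ.ar R) :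
    ∃ j < n, ∀ m, u m ∈ bg A P j := by
  classical
  set L : A.carrier → ℕ := fun v => sInf {j | v ∈ bg A P j} with hL
  have hLmem : ∀ v, v ∈ bg A P (L v) := by
    intro v
    obtain ⟨i0, hi0⟩ := P.mem_bag v
    have := Nat.sInf_mem (s := {j | v ∈ bg A P j}) ⟨i0.1, bg_of_bag A P i0 hi0⟩
    exact this
  obtain ⟨mstar, -, hmax⟩ := Finset.exists_max_image (Finset.univ : Finset (Fin (σ.ar R)))
    (fun m => L (u m)) ⟨⟨0, har⟩, Finset.mem_univ _⟩
  refine ⟨L (u mstar), bg_lt A P (hLmem (u mstar)), fun m => ?_⟩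
  by_cases heq : u m = u mstar
  · rw [heq]; exact hLmem _
  · have hadj : A.gaifman.Adj (u m) (u mstar) := ⟨heq, R, u, hu, ⟨m, rfl⟩, ⟨mstar, rfl⟩⟩
    obtain ⟨j0, hj1, hj2⟩ := P.mem_edge _ _ hadj
    have hj1' : u m ∈ bg A P j0.1 := bg_of_bag A P j0 hj1
    have hj2' : u mstar ∈ bg A P j0.1 := bg_of_bag A P j0 hj2
    rcases le_total (L (u mstar)) j0.1 with hle | hle
    · exact bg_interval A P (hmax m (Finset.mem_univ m)) hle (hLmem (u m)) hj1'
    · have h1 : L (u mstar) ≤ j0.1 := Nat.sInf_le hj2'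
      have h2 : L (u mstar) = j0.1 := le_antisymm h1 hle
      rw [h2]; exact hj1'

/-- Vertices appearing in the first `i` bags. -/
def Sset (i : ℕ) : Set A.carrier := {v | ∃ j, j < i ∧ v ∈ bg A P j}

variable (emb : ℕ → A.carrier → ℕ)

/-- The stage-`i` structure: induced on the first `i` bags, with the tuples
fitting in those bags (and the nullary part of `A`), coloured by `emb (i-1)`. -/
def Q (i : ℕ) : CStruc σ where
  carrier := ↥(Sset A P i)
  rel R t := A.rel R (fun m => (t m).1) ∧
    (σ.ar R = 0 ∨ ∃ j, j < i ∧ ∀ m, (t m).1 ∈ bg A P j)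
  col v := emb (i - 1) v.1

lemma Q_zero : UCW σ k (Q A P emb 0) :=
  UCW.empty _ ⟨fun x => by obtain ⟨j, hj, -⟩ := x.2; omega⟩

variable {w : ℕ}

open Classical in
/-- The recolouring used when moving from stage `i` to stage `i+1`. -/
noncomputable def gfun (i : ℕ) (c : ℕ) : ℕ :=
  if h : ∃ v, v ∈ bg A P (i - 1) ∧ emb (i - 1) v = c ∧ 1 ≤ c then emb i h.choose else 0

lemma emb_le (hemb1 : ∀ j v, v ∈ bg A P j → 1 ≤ emb j v ∧ emb j v ≤ w + 1)
    (hemb0 : ∀ j v, v ∉ bg A P j → emb j v = 0) (j : ℕ) (v : A.carrier) : emb j v ≤ w + 1 := by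
  by_cases h : v ∈ bg A P j
  · exact (hemb1 j v h).2
  · rw [hemb0 j v h]; omega

lemma gfun_le (hemb1 : ∀ j v, v ∈ bg A P j → 1 ≤ emb j v ∧ emb j v ≤ w + 1)
    (hemb0 : ∀ j v, v ∉ bg A P j → emb j v = 0) (i c : ℕ) : gfun A P emb i c ≤ w + 1 := by
  unfold gfun
  split
  · exact emb_le A P emb hemb1 hemb0 i _
  · omega

lemma gfun_col (hemb1 : ∀ j v, v ∈ bg A P j → 1 ≤ emb j v ∧ emb j v ≤ w + 1)
    (hemb0 : ∀ j v, v ∉ bg A P j → emb j v = 0)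
    (hembi : ∀ j, Set.InjOn (emb j) (bg A P j)) (i : ℕ) {v : A.carrier} (hv : v ∈ Sset A P i) :
    gfun A P emb i (emb (i - 1) v) = emb i v := by
  by_cases hb : v ∈ bg A P (i - 1)
  · have h1 : 1 ≤ emb (i - 1) v := (hemb1 _ _ hb).1
    have hex : ∃ v', v' ∈ bg A P (i - 1) ∧ emb (i - 1) v' = emb (i - 1) v ∧
        1 ≤ emb (i - 1) v := ⟨v, hb, rfl, h1⟩
    rw [gfun, dif_pos hex]
    obtain ⟨hb', heq, -⟩ := hex.choose_spec
    rw [hembi (i - 1) hb' hb heq]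
  · have hz : emb (i - 1) v = 0 := hemb0 _ _ hb
    rw [hz]
    have hnex : ¬ ∃ v', v' ∈ bg A P (i - 1) ∧ emb (i - 1) v' = 0 ∧ (1 : ℕ) ≤ 0 := by
      rintro ⟨-, -, -, h⟩; omega
    rw [gfun, dif_neg hnex]
    symm
    apply hemb0
    intro hvi
    obtain ⟨j, hj, hvj⟩ := hv
    exact hb (bg_interval A P (by omega) (by omega) hvj hvi)

open Classical in
/-- The carrier equivalence used at each step. -/
noncomputable def stepEquiv (i : ℕ) :
    (↥(Sset A P i) ⊕ ↥(bg A P i \ Sset A P i)) ≃ ↥(Sset A P (i + 1)) where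
  toFun := Sum.elim
    (fun a => ⟨a.1, by obtain ⟨j, hj, h⟩ := a.2; exact ⟨j, by omega, h⟩⟩)
    (fun b => ⟨b.1, ⟨i, Nat.lt_succ_self i, b.2.1⟩⟩)
  invFun x := if h : x.1 ∈ Sset A P i then Sum.inl ⟨x.1, h⟩
    else Sum.inr ⟨x.1, by
      obtain ⟨j, hj, hxj⟩ := x.2
      rcases Nat.lt_succ_iff_lt_or_eq.mp hj with h' | rfl
      · exact absurd ⟨j, h', hxj⟩ h
      · exact hxj, h⟩
  left_inv := by
    rintro (a | b)
    · dsimp only [Sum.elim_inl]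
      rw [dif_pos a.2]
    · dsimp only [Sum.elim_inr]
      rw [dif_neg b.2.2]
  right_inv := by
    intro x
    dsimp only
    by_cases h : x.1 ∈ Sset A P i
    · rw [dif_pos h]
      rfl
    · rw [dif_neg h]
      rfl

/-- The discrete structure on the new vertices of bag `i`. -/
def DD (i : ℕ) : CStruc σ where
  carrier := ↥(bg A P i \ Sset A P i)
  rel _ _ := False
  col v := emb i v.1

/-- Stage `i` after recolouring and adding the new vertices. -/
noncomputable def X2' (i : ℕ) : CStruc σ :=
  ((Q A P emb i).recolor (gfun A P emb i)).union (DD A P emb i)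

/-- The tuples to be introduced at stage `i`. -/
def Ufin (i : ℕ) : Set ((R : σ.symbols) × (Fin (σ.ar R) → A.carrier)) :=
  {p | A.rel p.1 p.2 ∧ 0 < σ.ar p.1 ∧ ∀ m, p.2 m ∈ bg A P i}

/-- The colour pattern of a tuple. -/
def Fmap (i : ℕ) (p : (R : σ.symbols) × (Fin (σ.ar R) → A.carrier)) :
    (R : σ.symbols) × (Fin (σ.ar R) → ℕ) :=
  ⟨p.1, fun m => emb i (p.2 m)⟩

lemma X2col (hemb1 : ∀ j v, v ∈ bg A P j → 1 ≤ emb j v ∧ emb j v ≤ w + 1)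
    (hemb0 : ∀ j v, v ∉ bg A P j → emb j v = 0)
    (hembi : ∀ j, Set.InjOn (emb j) (bg A P j)) (i : ℕ)
    (x : ↥(Sset A P i) ⊕ ↥(bg A P i \ Sset A P i)) :
    (X2' A P emb i).col x = emb i (stepEquiv A P i x).1 := by
  cases x with
  | inl a =>
    show gfun A P emb i (emb (i - 1) a.1) = emb i a.1
    exact gfun_col A P emb hemb1 hemb0 hembi i a.2
  | inr b => rfl

lemma step_rel_iff (hemb1 : ∀ j v, v ∈ bg A P j → 1 ≤ emb j v ∧ emb j v ≤ w + 1)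
    (hemb0 : ∀ j v, v ∉ bg A P j → emb j v = 0)
    (hembi : ∀ j, Set.InjOn (emb j) (bg A P j)) (i : ℕ) (R : σ.symbols)
    (t : Fin (σ.ar R) → ↥(Sset A P i) ⊕ ↥(bg A P i \ Sset A P i)) :
    (addT (X2' A P emb i) (Fmap A emb i '' Ufin A P i)).rel R t ↔
      (Q A P emb (i + 1)).rel R (fun m => stepEquiv A P i (t m)) := by
  constructor
  · intro h
    replace h : ((∃ s : Fin (σ.ar R) → ↥(Sset A P i), (∀ m, t m = Sum.inl (s m)) ∧
          (A.rel R (fun m => (s m).1) ∧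
            (σ.ar R = 0 ∨ ∃ j, j < i ∧ ∀ m, (s m).1 ∈ bg A P j))) ∨
        (∃ s : Fin (σ.ar R) → ↥(bg A P i \ Sset A P i),
          (∀ m, t m = Sum.inr (s m)) ∧ False)) ∨
        (∃ p ∈ Fmap A emb i '' Ufin A P i, ∃ hh : R = p.1,
          ∀ m : Fin (σ.ar p.1),
            (X2' A P emb i).col (t (Fin.cast (congrArg σ.ar hh).symm m)) = p.2 m) := h
    rcases h with (⟨s, hs, hrel, hdis⟩ | ⟨s, hs, hF⟩) | ⟨p, hpT, hh, hpat⟩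
    · refine ⟨?_, ?_⟩
      · show A.rel R fun m => (stepEquiv A P i (t m)).1
        have heq : (fun m => (stepEquiv A P i (t m)).1) = fun m => ((s m) : A.carrier) :=
          funext fun m => by rw [hs m]; rfl
        rw [heq]; exact hrel
      · show σ.ar R = 0 ∨ ∃ j, j < i + 1 ∧ ∀ m, (stepEquiv A P i (t m)).1 ∈ bg A P j
        rcases hdis with h | ⟨j, hj, hbag⟩
        · exact Or.inl h
        · refine Or.inr ⟨j, by omega, fun m => ?_⟩
          have heq : (stepEquiv A P i (t m)).1 = ((s m) : A.carrier) := by rw [hs m]; rfl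
          rw [heq]; exact hbag m
    · exact hF.elim
    · obtain ⟨q, hqU, rfl⟩ := hpT
      have hq1 : A.rel q.1 q.2 := hqU.1
      have hq2 : 0 < σ.ar q.1 := hqU.2.1
      have hq3 : ∀ m, q.2 m ∈ bg A P i := hqU.2.2
      subst hh
      have hpat' : ∀ m, (X2' A P emb i).col (t m) = emb i (q.2 m) := hpat
      have helem : ∀ m, (stepEquiv A P i (t m)).1 = q.2 m := by
        intro m
        have h1 : emb i ((stepEquiv A P i (t m)).1) = emb i (q.2 m) := by
          rw [← X2col A P emb hemb1 hemb0 hembi i (t m)]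
          exact hpat' m
        have h2 : 1 ≤ emb i (q.2 m) := (hemb1 i _ (hq3 m)).1
        have h3 : (stepEquiv A P i (t m)).1 ∈ bg A P i := by
          by_contra hc
          rw [hemb0 i _ hc] at h1
          omega
        exact hembi i h3 (hq3 m) h1
      refine ⟨?_, ?_⟩
      · show A.rel q.1 fun m => (stepEquiv A P i (t m)).1
        have heq : (fun m => (stepEquiv A P i (t m)).1) = q.2 := funext helem
        exact heq.symm ▸ hq1
      · show σ.ar q.1 = 0 ∨ ∃ j, j < i + 1 ∧ ∀ m, (stepEquiv A P i (t m)).1 ∈ bg A P j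
        refine Or.inr ⟨i, Nat.lt_succ_self i, fun m => ?_⟩
        exact (helem m).symm ▸ hq3 m
  · intro h
    have hrel : A.rel R fun m => (stepEquiv A P i (t m)).1 := h.1
    have hdis : σ.ar R = 0 ∨ ∃ j, j < i + 1 ∧ ∀ m, (stepEquiv A P i (t m)).1 ∈ bg A P j := h.2
    show ((∃ s : Fin (σ.ar R) → ↥(Sset A P i), (∀ m, t m = Sum.inl (s m)) ∧
          (A.rel R (fun m => (s m).1) ∧
            (σ.ar R = 0 ∨ ∃ j, j < i ∧ ∀ m, (s m).1 ∈ bg A P j))) ∨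
        (∃ s : Fin (σ.ar R) → ↥(bg A P i \ Sset A P i),
          (∀ m, t m = Sum.inr (s m)) ∧ False)) ∨
        (∃ p ∈ Fmap A emb i '' Ufin A P i, ∃ hh : R = p.1,
          ∀ m : Fin (σ.ar p.1),
            (X2' A P emb i).col (t (Fin.cast (congrArg σ.ar hh).symm m)) = p.2 m)
    by_cases har : σ.ar R = 0
    · have hnone : ∀ m : Fin (σ.ar R), False := fun m => by have := m.isLt; omega
      refine Or.inl (Or.inl ⟨fun m => (hnone m).elim, fun m => (hnone m).elim,
        ?_, Or.inl har⟩)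
      have heq : (fun m => (stepEquiv A P i (t m)).1) =
          (fun m : Fin (σ.ar R) => (((hnone m).elim : ↥(Sset A P i))).1) :=
        funext fun m => (hnone m).elim
      exact heq ▸ hrel
    · rcases hdis with h' | ⟨j, hj, hbag⟩
      · exact absurd h' har
      rcases Nat.lt_succ_iff_lt_or_eq.mp hj with hji | hji2
      · have hS : ∀ m, (stepEquiv A P i (t m)).1 ∈ Sset A P i := fun m => ⟨j, hji, hbag m⟩
        have hinl : ∀ m, ∃ a : ↥(Sset A P i), t m = Sum.inl a := by
          intro m
          rcases htm : t m with a | b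
          · exact ⟨a, rfl⟩
          · exfalso
            have hx := hS m
            rw [htm] at hx
            exact b.2.2 hx
        choose s hs using hinl
        refine Or.inl (Or.inl ⟨s, hs, ?_, Or.inr ⟨j, hji, fun m => ?_⟩⟩)
        · show A.rel R fun m => ((s m) : A.carrier)
          have heq : (fun m => ((s m) : A.carrier)) = fun m => (stepEquiv A P i (t m)).1 :=
            funext fun m => by rw [hs m]; rfl
          rw [heq]; exact hrel
        · show ((s m) : A.carrier) ∈ bg A P j
          have heq : ((s m) : A.carrier) = (stepEquiv A P i (t m)).1 := by rw [hs m]; rfl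
          rw [heq]; exact hbag m
      · rw [hji2] at hbag
        exact Or.inr ⟨⟨R, fun m => emb i ((stepEquiv A P i (t m)).1)⟩,
          ⟨⟨R, fun m => (stepEquiv A P i (t m)).1⟩,
            ⟨hrel, Nat.pos_of_ne_zero har, hbag⟩, rfl⟩,
          rfl, fun m => X2col A P emb hemb1 hemb0 hembi i (t m)⟩

lemma Q_succ [Finite A.carrier] (hact : (activeSet A).Finite)
    (hemb1 : ∀ j v, v ∈ bg A P j → 1 ≤ emb j v ∧ emb j v ≤ w + 1)
    (hemb0 : ∀ j v, v ∉ bg A P j → emb j v = 0)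
    (hembi : ∀ j, Set.InjOn (emb j) (bg A P j)) (i : ℕ)
    (hQ : UCW σ (w + 2) (Q A P emb i)) : UCW σ (w + 2) (Q A P emb (i + 1)) := by
  have hX1 : UCW σ (w + 2) ((Q A P emb i).recolor (gfun A P emb i)) :=
    UCW.recolor _ (fun c _ => by have := gfun_le A P emb hemb1 hemb0 i c; omega) hQ
  have hD : UCW σ (w + 2) (DD A P emb i) :=
    ucw_discrete (by omega) (Nat.card (DD A P emb i).carrier) _ rfl
      ((Set.toFinite (bg A P i \ Sset A P i)).to_subtype) (fun _ _ h => h)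
      (fun a => by
        have := emb_le A P emb hemb1 hemb0 i a.1
        show emb i a.1 < w + 2
        omega)
  have hUfin : (Ufin A P i).Finite := by
    have hbig : {p : (R : σ.symbols) × (Fin (σ.ar R) → A.carrier) |
        A.rel p.1 p.2 ∧ 0 < σ.ar p.1}.Finite := by
      refine Set.Finite.subset (hact.biUnion
        (fun R _ => Set.Finite.image (Sigma.mk R) (Set.finite_univ))) ?_
      rintro ⟨R, u⟩ ⟨h1, h2⟩
      exact Set.mem_biUnion ⟨h2, u, h1⟩ ⟨u, Set.mem_univ u, rfl⟩
    exact hbig.subset (fun p hp => ⟨hp.1, hp.2.1⟩)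
  have hX3 : UCW σ (w + 2) (addT (X2' A P emb i) (Fmap A emb i '' Ufin A P i)) := by
    refine ucw_addT (UCW.union hX1 hD) (hUfin.image _) ?_
    rintro p ⟨q, hq, rfl⟩ m
    show emb i (q.2 m) < w + 2
    have := emb_le A P emb hemb1 hemb0 i (q.2 m)
    omega
  refine UCW.iso (A := addT (X2' A P emb i) (Fmap A emb i '' Ufin A P i))
    ⟨stepEquiv A P i, step_rel_iff A P emb hemb1 hemb0 hembi i, ?_⟩ hX3
  intro a
  exact (X2col A P emb hemb1 hemb0 hembi i a).symm

lemma Q_all [Finite A.carrier] (hact : (activeSet A).Finite)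
    (hemb1 : ∀ j v, v ∈ bg A P j → 1 ≤ emb j v ∧ emb j v ≤ w + 1)
    (hemb0 : ∀ j v, v ∉ bg A P j → emb j v = 0)
    (hembi : ∀ j, Set.InjOn (emb j) (bg A P j)) (i : ℕ) :
    UCW σ (w + 2) (Q A P emb i) := by
  induction i with
  | zero => exact Q_zero A P emb
  | succ i ih => exact Q_succ A P emb hact hemb1 hemb0 hembi i ih

lemma ucw_main [Finite A.carrier] (hact : (activeSet A).Finite)
    (hemb1 : ∀ j v, v ∈ bg A P j → 1 ≤ emb j v ∧ emb j v ≤ w + 1)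
    (hemb0 : ∀ j v, v ∉ bg A P j → emb j v = 0)
    (hembi : ∀ j, Set.InjOn (emb j) (bg A P j))
    (h0 : ∀ a, A.col a = 0) : UCW σ (w + 2) A := by
  have hQ := Q_all A P emb hact hemb1 hemb0 hembi n
  have hAll : ∀ v, v ∈ Sset A P n := fun v => by
    obtain ⟨j, hj⟩ := P.mem_bag v
    exact ⟨j.1, j.isLt, bg_of_bag A P j hj⟩
  have hrc : UCW σ (w + 2) ((Q A P emb n).recolor fun _ => 0) :=
    UCW.recolor _ (fun _ _ => by omega) hQ
  refine UCW.iso (A := (Q A P emb n).recolor fun _ => 0)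
    ⟨⟨fun x => x.1, fun v => ⟨v, hAll v⟩, fun x => rfl, fun v => rfl⟩, ?_, ?_⟩ hrc
  · intro R t
    constructor
    · exact fun h => h.1
    · intro h
      have h' : A.rel R fun m => (t m).1 := h
      refine ⟨h', ?_⟩
      by_cases har : σ.ar R = 0
      · exact Or.inl har
      · obtain ⟨j, hjn, hfit⟩ := tuple_fits A P h' (Nat.pos_of_ne_zero har)
        exact Or.inr ⟨j, hjn, hfit⟩
  · intro a
    exact h0 a.1

end Main

theorem stmt1' {σ : Signature} (A : CStruc σ) [Finite A.carrier]
    (h0 : ∀ a, A.col a = 0) :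
    ucw A ≤ pw A.gaifman + 2 := by
  classical
  by_cases hact : (activeSet A).Finite
  · have hne : {w | pwLe A.gaifman w}.Nonempty := by
      refine ⟨Nat.card A.carrier, 1, ⟨fun _ => Set.univ, fun v => ⟨0, Set.mem_univ v⟩,
        fun u v _ => ⟨0, Set.mem_univ u, Set.mem_univ v⟩,
        fun v i j m _ _ _ _ => Set.mem_univ v⟩, fun i => by rw [Set.ncard_univ]; omega⟩
    have hp : pwLe A.gaifman (pw A.gaifman) := Nat.sInf_mem hne
    obtain ⟨n, P, hP⟩ := hp
    have hembex : ∀ j : ℕ, ∃ f : A.carrier → ℕ,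
        (∀ v ∈ bg A P j, 1 ≤ f v ∧ f v ≤ pw A.gaifman + 1) ∧
        (∀ v ∉ bg A P j, f v = 0) ∧ Set.InjOn f (bg A P j) := by
      intro j
      haveI := Fintype.ofFinite A.carrier
      have hcard : (bg A P j).ncard ≤ pw A.gaifman + 1 := by
        rw [bg]; split
        · exact hP _
        · simp
      haveI : Fintype ↥(bg A P j) := (Set.toFinite _).fintype
      have hcard' : Fintype.card ↥(bg A P j) ≤ Fintype.card (Fin (pw A.gaifman + 1)) := by
        rw [Fintype.card_fin, ← Nat.card_eq_fintype_card, Nat.card_coe_set_eq]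
        exact hcard
      obtain ⟨F⟩ := Function.Embedding.nonempty_of_card_le hcard'
      refine ⟨fun v => if h : v ∈ bg A P j then (F ⟨v, h⟩).1 + 1 else 0, ?_, ?_, ?_⟩
      · intro v hv; dsimp only; rw [dif_pos hv]; have := (F ⟨v, hv⟩).isLt; omega
      · intro v hv; dsimp only; rw [dif_neg hv]
      · intro x hx y hy hxy
        dsimp only at hxy
        rw [dif_pos hx, dif_pos hy] at hxy
        have hFeq : F ⟨x, hx⟩ = F ⟨y, hy⟩ := Fin.ext (by omega)
        exact congrArg Subtype.val (F.injective hFeq)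
    choose emb hembA hembB hembC using hembex
    have hA : UCW σ (pw A.gaifman + 2) A :=
      ucw_main A P emb hact hembA hembB hembC h0
    exact Nat.sInf_le hA
  · have hempty : {k | UCW σ k A} = ∅ := by
      ext k
      simp only [Set.mem_setOf_eq, Set.mem_empty_iff_false, iff_false]
      exact fun h => hact (active_finite h)
    show sInf {k | UCW σ k A} ≤ _
    rw [hempty, Nat.sInf_empty]
    omega


/-- every 1-coloured structure A satisfies ucw(A) ≤ pw(G_A) + 2. -/
theorem stmt1 {σ : Signature} (A : CStruc σ) [Finite A.carrier]
    (h0 : ∀ a, A.col a = 0) :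
    ucw A ≤ pw A.gaifman + 2 := stmt1' A h0
end

section
/- For every n there exists a finite tree (as an undirected graph) whose path-width is at least n. -/
namespace S9

/-- Vertices: lists over `Fin 3` of length at most `N` (complete ternary tree). -/
def Vt (N : ℕ) := {l : List (Fin 3) // l.length ≤ N}

instance (N : ℕ) : DecidableEq (Vt N) := by unfold Vt; infer_instance

/-- The complete ternary tree of depth `N`: `a :: l` is a child of `l`. -/
def TG (N : ℕ) : SimpleGraph (Vt N) where
  Adj u v := (∃ a, u.1 = a :: v.1) ∨ (∃ a, v.1 = a :: u.1)
  symm := ⟨by rintro u v (h | h) <;> [right; left] <;> exact h⟩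
  loopless := ⟨by
    rintro u (⟨a, h⟩ | ⟨a, h⟩) <;>
      exact absurd (congrArg List.length h) (by simp)⟩

def emb (N : ℕ) (v : Vt N) : List.Vector (Fin 3) N × Fin (N+1) :=
  (⟨v.1 ++ List.replicate (N - v.1.length) 0, by have := v.2; simp; omega⟩,
   ⟨v.1.length, by have := v.2; omega⟩)

noncomputable instance (N : ℕ) : Fintype (Vt N) := by
  apply Fintype.ofInjective (emb N)
  rintro ⟨l₁, h₁⟩ ⟨l₂, h₂⟩ h
  simp only [emb] at h
  obtain ⟨hpad, hlen⟩ := Prod.mk.inj h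
  replace hlen := Fin.mk.inj hlen
  replace hpad := congrArg Subtype.val hpad
  simp only at hpad
  have : l₁ = l₂ := by
    have t1 : (l₁ ++ List.replicate (N - l₁.length) 0).take l₁.length = l₁ := by
      simp [List.take_left]
    have t2 : (l₂ ++ List.replicate (N - l₂.length) 0).take l₂.length = l₂ := by
      simp [List.take_left]
    rw [← t1, ← t2, ← hlen, hpad, hlen]
  subst this; rfl

open SimpleGraph

/-- Walk down the tree from `t ++ v` to `v`. -/
def down (N : ℕ) : (t v : List (Fin 3)) → (h : (t ++ v).length ≤ N) →
    (TG N).Walk ⟨t ++ v, h⟩ ⟨v, by simp at h; omega⟩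
  | [], _, _ => Walk.nil
  | a :: t, v, h => by
    refine Walk.cons ?_ (down N t v (by simp at h ⊢; omega))
    exact Or.inl ⟨a, rfl⟩

lemma down_support (N : ℕ) : ∀ (t v : List (Fin 3)) (h : (t ++ v).length ≤ N),
    ∀ x ∈ (down N t v h).support, v <:+ x.1
  | [], v, h => by
    intro x hx
    erw [down, Walk.support_nil, List.mem_singleton] at hx
    subst hx
    exact List.suffix_refl _
  | a :: t, v, h => by
    intro x hx
    erw [down, Walk.support_cons, List.mem_cons] at hx
    rcases hx with rfl | hx
    · exact ⟨a :: t, rfl⟩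
    · exact down_support N t v _ x hx

lemma TG_connected (N : ℕ) : (TG N).Connected := by
  rw [connected_iff]
  refine ⟨fun u v => ?_, ⟨⟨[], by simp⟩⟩⟩
  have f : ∀ w : Vt N, (TG N).Reachable w ⟨[], by simp⟩ := fun w =>
    ⟨((down N w.1 [] (by simpa using w.2)).copy (Subtype.ext (List.append_nil _)) rfl)⟩
  exact (f u).trans (f v).symm

lemma TG_acyclic (N : ℕ) : (TG N).IsAcyclic := by
  intro v c hc
  obtain ⟨m, hm⟩ : ∃ m, m ∈ List.argmax (fun x : Vt N => x.1.length) c.support := by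
    cases h : List.argmax (fun x : Vt N => x.1.length) c.support with
    | none => exact absurd (List.argmax_eq_none.1 h) c.support_ne_nil
    | some m => exact ⟨m, rfl⟩
  have hmem : m ∈ c.support := List.argmax_mem hm
  have hmax : ∀ x ∈ c.support, x.1.length ≤ m.1.length := fun x hx =>
    le_of_not_gt (List.not_lt_of_mem_argmax (f := fun x : Vt N => x.1.length) hx hm)
  have hcyc : (c.rotate m hmem).IsCycle := Walk.IsCycle.rotate hmem hc
  have hsub : ∀ x ∈ (c.rotate m hmem).support, x ∈ c.support := by
    intro x hx
    rw [Walk.support_eq_cons, List.mem_cons] at hx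
    rcases hx with rfl | hx
    · exact hmem
    · exact List.mem_of_mem_tail
        (((Walk.support_rotate c m hmem).perm.mem_iff).1 hx)
  generalize hrot : c.rotate m hmem = c' at hcyc hsub
  obtain ⟨x, h, p, rfl⟩ : ∃ (x : Vt N) (h : (TG N).Adj m x) (p : (TG N).Walk x m),
      c' = Walk.cons h p := by
    cases c' with
    | nil => exact absurd hcyc Walk.IsCycle.not_of_nil
    | cons h p => exact ⟨_, h, p, rfl⟩
  rw [Walk.cons_isCycle_iff] at hcyc
  obtain ⟨hpath, hedge⟩ := hcyc
  have hxm : x ≠ m := fun hxe => ((TG N).loopless.irrefl m (hxe ▸ h)).elim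
  obtain ⟨y, h', q, hq⟩ := Walk.exists_eq_cons_of_ne (Ne.symm hxm) p.reverse
  have hys : y ∈ (Walk.cons h p).support := by
    have : y ∈ p.reverse.support := by rw [hq]; simp
    rw [Walk.support_reverse, List.mem_reverse] at this
    simp [this]
  have hxs : x ∈ (Walk.cons h p).support := by simp
  have tail_of : ∀ (z : Vt N), (TG N).Adj m z → z ∈ (Walk.cons h p).support →
      z.1 = m.1.tail := by
    rintro z (⟨a, ha⟩ | ⟨a, ha⟩) hz
    · rw [ha]; rfl
    · exfalso
      have := hmax z (hsub z hz)
      rw [ha] at this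
      simp at this
  have hxy : x = y := Subtype.ext ((tail_of x h hxs).trans (tail_of y h' hys).symm)
  apply hedge
  have : s(m, y) ∈ p.reverse.edges := by rw [hq]; simp
  rw [Walk.edges_reverse, List.mem_reverse] at this
  rw [← hxy] at this
  exact this

lemma TG_isTree (N : ℕ) : (TG N).IsTree := ⟨TG_connected N, TG_acyclic N⟩

/-- A bag "between" bags containing the two endpoints of a walk contains a vertex
of the walk. -/
lemma cross {V : Type} {G : SimpleGraph V} {m : ℕ} (P : PathDecomp G m) {t : Fin m}
    {u w : V} (W : G.Walk u w) :
    ∀ (i j : Fin m), i ≤ t → t ≤ j → u ∈ P.bag i → w ∈ P.bag j →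
      ∃ p ∈ W.support, p ∈ P.bag t := by
  induction W with
  | nil =>
    intro i j hit htj hu hw
    exact ⟨_, by simp, P.interval _ i j t hit htj hu hw⟩
  | @cons u u' w ha W ih =>
    intro i j hit htj hu hw
    obtain ⟨s, hus, hu's⟩ := P.mem_edge u u' ha
    rcases le_or_gt s t with hst | hts
    · obtain ⟨p, hp, hpt⟩ := ih s j hst htj hu's hw
      exact ⟨p, by simp [hp], hpt⟩
    · exact ⟨u, by simp, P.interval u i s t hit hts.le hu hus⟩

/-- The subtree of vertices having `v` as a suffix. -/
def SS (N : ℕ) (v : List (Fin 3)) : Set (Vt N) := {l | v <:+ l.1}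

lemma suffix_eq {α : Type*} {s1 s2 l : List α} (h1 : s1 <:+ l) (h2 : s2 <:+ l)
    (h : s1.length = s2.length) : s1 = s2 := by
  obtain ⟨t1, rfl⟩ := h1
  obtain ⟨t2, ht2⟩ := h2
  exact ((List.append_inj' ht2 h.symm).2).symm

lemma SS_disj {N : ℕ} {a b : Fin 3} {v : List (Fin 3)} (hab : a ≠ b) {x : Vt N}
    (hx : x ∈ SS N (a :: v)) (hy : x ∈ SS N (b :: v)) : False := by
  have := suffix_eq hx hy (by simp)
  exact hab (by simpa using this)

lemma SS_mono {N : ℕ} {a : Fin 3} {v : List (Fin 3)} :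
    SS N (a :: v) ⊆ SS N v := fun x hx =>
  (List.suffix_cons a v).trans hx

/-- Key lemma: any path decomposition has a bag meeting the depth-`k` subtree
above `v` in at least `k + 1` vertices. -/
lemma key (N m : ℕ) (P : PathDecomp (TG N) m) :
    ∀ (k : ℕ) (v : List (Fin 3)), v.length + k ≤ N →
      ∃ i, k + 1 ≤ (P.bag i ∩ SS N v).ncard := by
  intro k
  induction k with
  | zero =>
    intro v hv
    obtain ⟨i, hi⟩ := P.mem_bag ⟨v, by omega⟩
    refine ⟨i, ?_⟩
    rw [Nat.succ_le_iff, Set.ncard_pos (Set.toFinite _)]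
    exact ⟨⟨v, by omega⟩, hi, List.suffix_rfl⟩
  | succ k ih =>
    intro v hv
    by_contra hbig
    push_neg at hbig
    have hsmall : ∀ i, (P.bag i ∩ SS N v).ncard ≤ k + 1 := fun i => by
      have := hbig i; omega
    -- for each child `a`, a bag fully inside the subtree of `a :: v`
    have step : ∀ a : Fin 3, ∃ i, k + 1 ≤ (P.bag i ∩ SS N (a :: v)).ncard ∧
        P.bag i ∩ SS N v ⊆ SS N (a :: v) := by
      intro a
      obtain ⟨i, hi⟩ := ih (a :: v) (by simp; omega)
      refine ⟨i, hi, ?_⟩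
      have hsub : P.bag i ∩ SS N (a :: v) ⊆ P.bag i ∩ SS N v :=
        Set.inter_subset_inter_right _ SS_mono
      have := Set.eq_of_subset_of_ncard_le hsub
        (le_trans (hsmall i) hi) (Set.toFinite _)
      rw [← this]
      exact Set.inter_subset_right
    choose I hI hIsub using step
    have hne : ∀ a, (P.bag (I a) ∩ SS N (a :: v)).Nonempty := fun a => by
      rw [← Set.ncard_pos (Set.toFinite _)]; have := hI a; omega
    have hinj : Function.Injective I := by
      intro a b hab
      by_contra hne'
      obtain ⟨x, hx1, hx2⟩ := hne a
      exact SS_disj hne' hx2 (hIsub b (hab ▸ ⟨hx1, SS_mono hx2⟩))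
    -- order the three indices
    obtain ⟨a, b, c, hab, hac, hbc, h1, h2⟩ :
        ∃ a b c : Fin 3, a ≠ b ∧ a ≠ c ∧ b ≠ c ∧ I a < I b ∧ I b < I c := by
      have h01 := (hinj.ne (show (0:Fin 3) ≠ 1 by decide)).lt_or_gt
      have h02 := (hinj.ne (show (0:Fin 3) ≠ 2 by decide)).lt_or_gt
      have h12 := (hinj.ne (show (1:Fin 3) ≠ 2 by decide)).lt_or_gt
      rcases h01 with h01 | h01 <;> rcases h02 with h02 | h02 <;>
        rcases h12 with h12 | h12
      · exact ⟨0, 1, 2, by decide, by decide, by decide, h01, h12⟩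
      · exact ⟨0, 2, 1, by decide, by decide, by decide, h02, h12⟩
      · exact absurd ((h02.trans h01).trans h12) (lt_irrefl _)
      · exact ⟨2, 0, 1, by decide, by decide, by decide, h02, h01⟩
      · exact ⟨1, 0, 2, by decide, by decide, by decide, h01, h02⟩
      · exact absurd ((h02.trans h12).trans h01) (lt_irrefl _)
      · exact ⟨1, 2, 0, by decide, by decide, by decide, h12, h02⟩
      · exact ⟨2, 1, 0, by decide, by decide, by decide, h12, h01⟩
    -- pick endpoints in the `a`- and `c`- subtrees
    obtain ⟨u, hub, hus⟩ := hne a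
    obtain ⟨w, hwb, hws⟩ := hne c
    -- build a walk from `u` to `w` avoiding the `b`-subtree
    obtain ⟨tu, htu⟩ := hus
    obtain ⟨tw, htw⟩ := hws
    have hvN : v.length ≤ N := by omega
    have havN : (a :: v).length ≤ N := by simp; omega
    have hcvN : (c :: v).length ≤ N := by simp; omega
    have hu2 : (tu ++ (a :: v)).length ≤ N := by rw [htu]; exact u.2
    have hw2 : (tw ++ (c :: v)).length ≤ N := by rw [htw]; exact w.2
    let W1 : (TG N).Walk u ⟨a :: v, havN⟩ :=
      (down N tu (a :: v) hu2).copy (Subtype.ext htu) rfl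
    let W2 : (TG N).Walk w ⟨c :: v, hcvN⟩ :=
      (down N tw (c :: v) hw2).copy (Subtype.ext htw) rfl
    have adj1 : (TG N).Adj ⟨a :: v, havN⟩ ⟨v, hvN⟩ := Or.inl ⟨a, rfl⟩
    have adj2 : (TG N).Adj ⟨v, hvN⟩ ⟨c :: v, hcvN⟩ := Or.inr ⟨c, rfl⟩
    let W : (TG N).Walk u w := W1.append (Walk.cons adj1 (Walk.cons adj2 W2.reverse))
    obtain ⟨p, hps, hpb⟩ := cross P W (I a) (I c) h1.le h2.le hub hwb
    -- p is in the b-subtree...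
    have hpSv : p ∈ SS N (b :: v) := by
      apply hIsub b
      refine ⟨hpb, ?_⟩
      -- p ∈ SS N v
      erw [Walk.mem_support_append_iff] at hps
      rcases hps with hps | hps
      · have : (a :: v) <:+ p.1 := by
          have := down_support N tu (a :: v) hu2 p (by
            erw [Walk.support_copy] at hps; exact hps)
          exact this
        exact SS_mono this
      · erw [Walk.support_cons, Walk.support_cons, List.mem_cons, List.mem_cons] at hps
        rcases hps with rfl | hps
        · exact List.suffix_cons a v
        rcases hps with rfl | hps
        · exact List.suffix_rfl
        · have : (c :: v) <:+ p.1 := by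
            erw [Walk.support_reverse, List.mem_reverse] at hps
            have := down_support N tw (c :: v) hw2 p (by
              erw [Walk.support_copy] at hps; exact hps)
            exact this
          exact SS_mono this
    -- ... but also on the walk, contradiction
    erw [Walk.mem_support_append_iff] at hps
    rcases hps with hps | hps
    · have : (a :: v) <:+ p.1 :=
        down_support N tu (a :: v) hu2 p (by erw [Walk.support_copy] at hps; exact hps)
      exact SS_disj hab this hpSv
    · erw [Walk.support_cons, Walk.support_cons, List.mem_cons, List.mem_cons] at hps
      rcases hps with rfl | hps
      · exact SS_disj hab List.suffix_rfl hpSv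
      rcases hps with rfl | hps
      · -- p = ⟨v, _⟩ but b :: v <:+ v is impossible
        have : (b :: v).length ≤ v.length := List.IsSuffix.length_le hpSv
        simp at this
      · have : (c :: v) <:+ p.1 := by
          erw [Walk.support_reverse, List.mem_reverse] at hps
          exact down_support N tw (c :: v) hw2 p (by erw [Walk.support_copy] at hps; exact hps)
        exact SS_disj hbc hpSv this

end S9

/-- for every n there is a finite tree of path-width at least n. -/
theorem stmt9 (n : ℕ) :
    ∃ (V : Type) (_ : Fintype V) (G : SimpleGraph V), G.IsTree ∧ n ≤ pw G := by
  classical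
  refine ⟨S9.Vt n, inferInstance, S9.TG n, S9.TG_isTree n, ?_⟩
  apply le_csInf
  · -- pwLe holds for some w: one big bag
    refine ⟨Fintype.card (S9.Vt n), 1, ⟨fun _ => Set.univ, fun v => ⟨0, trivial⟩,
      fun u v _ => ⟨0, trivial, trivial⟩, fun v i j m _ _ _ _ => trivial⟩, fun i => ?_⟩
    rw [Set.ncard_univ, Nat.card_eq_fintype_card]
    omega
  · rintro w ⟨m, P, hP⟩
    obtain ⟨i, hi⟩ := S9.key n m P n [] (by simp)
    have : (P.bag i ∩ S9.SS n []).ncard ≤ (P.bag i).ncard :=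
      Set.ncard_le_ncard Set.inter_subset_left (Set.toFinite _)
    have := hP i
    omega
end

section
/- Every relational structure A satisfies ucwf(A) ≤ tw(G_A) + 2, where ucwf is unary clique-width with fusion and tw is the tree-width of the Gaifman graph. -/
/-- The equivalence relation identifying all elements of colour `c`. -/
def fuseSetoid {σ : Signature} (A : CStruc σ) (c : ℕ) : Setoid A.carrier where
  r a b := a = b ∨ (A.col a = c ∧ A.col b = c)
  iseqv := by
    constructor
    · intro a; exact Or.inl rfl
    · rintro a b (rfl | ⟨h1, h2⟩)
      · exact Or.inl rfl
      · exact Or.inr ⟨h2, h1⟩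
    · rintro a b d (rfl | ⟨h1, h2⟩) (rfl | ⟨h3, h4⟩)
      · exact Or.inl rfl
      · exact Or.inr ⟨h3, h4⟩
      · exact Or.inr ⟨h1, h2⟩
      · exact Or.inr ⟨h1, h4⟩

/-- Fusion of all elements of colour `c`: the quotient structure, with
relations induced existentially and the induced colouring. -/
def CStruc.fuse {σ : Signature} (A : CStruc σ) (c : ℕ) : CStruc σ where
  carrier := Quotient (fuseSetoid A c)
  rel R t := ∃ u : Fin (σ.ar R) → A.carrier,
    (∀ i, Quotient.mk (fuseSetoid A c) (u i) = t i) ∧ A.rel R u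
  col := Quotient.lift A.col (by
    rintro a b (rfl | ⟨h1, h2⟩)
    · rfl
    · rw [h1, h2])

/-- The class UCWF_k[σ]: like UCW_k[σ] but additionally closed under fusion
of all elements of a colour `c < k`. -/
inductive UCWF (σ : Signature) (k : ℕ) : CStruc σ → Prop where
  | empty (A : CStruc σ) (h : IsEmpty A.carrier) : UCWF σ k A
  | single (hk : 0 < k) (A : CStruc σ) (hsub : ∀ a b : A.carrier, a = b)
      (hne : Nonempty A.carrier)
      (hrel : ∀ (R : σ.symbols) (t : Fin (σ.ar R) → A.carrier), ¬ A.rel R t)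
      (hcol : ∀ a, A.col a = 0) : UCWF σ k A
  | union {A B : CStruc σ} : UCWF σ k A → UCWF σ k B → UCWF σ k (A.union B)
  | recolor {A : CStruc σ} (f : ℕ → ℕ) (hf : ∀ i, i < k → f i < k) :
      UCWF σ k A → UCWF σ k (A.recolor f)
  | introduce {A : CStruc σ} (R : σ.symbols) (c : Fin (σ.ar R) → ℕ)
      (hc : ∀ i, c i < k) : UCWF σ k A → UCWF σ k (A.introduce R c)
  | fuse {A : CStruc σ} (c : ℕ) (hc : c < k) : UCWF σ k A → UCWF σ k (A.fuse c)
  | iso {A B : CStruc σ} (e : CIso A B) : UCWF σ k A → UCWF σ k B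

/-- Unary clique-width with fusion. -/
noncomputable def ucwf {σ : Signature} (A : CStruc σ) : ℕ := sInf {k | UCWF σ k A}

/-- A tree decomposition of `G` over an index graph `T` (intended to be a tree). -/
structure TreeDecomp {V ι : Type} (G : SimpleGraph V) (T : SimpleGraph ι) where
  bag : ι → Set V
  mem_bag : ∀ v, ∃ i, v ∈ bag i
  mem_edge : ∀ u v, G.Adj u v → ∃ i, u ∈ bag i ∧ v ∈ bag i
  subtree : ∀ v : V, (T.induce {i | v ∈ bag i}).Connected

/-- `G` has tree-width at most `w`. -/
def twLe {V : Type} (G : SimpleGraph V) (w : ℕ) : Prop :=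
  ∃ (ι : Type) (T : SimpleGraph ι), T.IsTree ∧
    ∃ D : TreeDecomp G T, ∀ i, (D.bag i).ncard ≤ w + 1

/-- The tree-width of `G`. -/
noncomputable def tw {V : Type} (G : SimpleGraph V) : ℕ := sInf {w | twLe G w}

open Classical

namespace Stmt14

variable {σ : Signature}

/-- Positive-arity symbols having some fact. -/
def posRel (B : CStruc σ) : Set σ.symbols :=
  {R | 0 < σ.ar R ∧ ∃ t, B.rel R t}

lemma posRel_finite {k : ℕ} {B : CStruc σ} (h : UCWF σ k B) : (posRel B).Finite := by
  induction h with
  | empty A h =>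
    have : posRel A = ∅ := by
      ext R
      simp only [posRel, Set.mem_setOf_eq, Set.mem_empty_iff_false, iff_false, not_and]
      rintro har ⟨t, -⟩
      exact h.false (t ⟨0, har⟩)
    rw [this]; exact Set.finite_empty
  | single hk A hsub hne hrel hcol =>
    have : posRel A = ∅ := by
      ext R
      simp only [posRel, Set.mem_setOf_eq, Set.mem_empty_iff_false, iff_false, not_and]
      rintro har ⟨t, ht⟩
      exact hrel R t ht
    rw [this]; exact Set.finite_empty
  | union hA hB ihA ihB =>
    refine (ihA.union ihB).subset ?_
    rintro R ⟨har, t, (⟨s, -, hs⟩ | ⟨s, -, hs⟩)⟩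
    · exact Or.inl ⟨har, s, hs⟩
    · exact Or.inr ⟨har, s, hs⟩
  | recolor f hf h ih =>
    exact ih.subset (by rintro R ⟨har, t, ht⟩; exact ⟨har, t, ht⟩)
  | introduce R c hc h ih =>
    refine (ih.insert R).subset ?_
    rintro S ⟨har, t, (h1 | ⟨rfl, -⟩)⟩
    · exact Set.mem_insert_of_mem _ ⟨har, t, h1⟩
    · exact Set.mem_insert _ _
  | fuse c hc h ih =>
    refine ih.subset ?_
    rintro R ⟨har, t, u, -, hu⟩
    exact ⟨har, u, hu⟩
  | iso e h ih =>
    refine ih.subset ?_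
    rintro R ⟨har, t, ht⟩
    refine ⟨har, fun i => e.toEquiv.symm (t i), ?_⟩
    rw [e.rel_iff]
    simpa using ht

lemma twLe_card {V : Type} [Finite V] (G : SimpleGraph V) : twLe G (Nat.card V) := by
  have hsub : ∀ (u v : PUnit.{1}), u = v := fun u v => rfl
  have hconn : (⊥ : SimpleGraph PUnit.{1}).Connected := by
    constructor
    · intro u v
      rw [hsub u v]
  have hac : SimpleGraph.IsAcyclic (⊥ : SimpleGraph PUnit.{1}) := by
    intro v c hc
    cases c with
    | nil => exact hc.ne_nil rfl
    | cons h _ => exact h.elim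
  refine ⟨PUnit, ⊥, ⟨hconn, hac⟩,
    ⟨⟨fun _ => Set.univ, fun v => ⟨⟨⟩, trivial⟩, fun u v _ => ⟨⟨⟩, trivial, trivial⟩,
      fun v => ?_⟩, fun i => ?_⟩⟩
  · haveI : Nonempty ({i | v ∈ (fun _ => (Set.univ : Set V)) i} : Set PUnit.{1}) :=
      ⟨⟨⟨⟩, trivial⟩⟩
    constructor
    intro a b
    have : a = b := Subtype.ext (hsub _ _)
    rw [this]
  · rw [Set.ncard_univ]; omega

/-- The target structure: induced substructure on `U` with colouring `col`. -/
def TargetC (A : CStruc σ) (U : Set A.carrier) (col : U → ℕ) : CStruc σ where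
  carrier := U
  rel R t := A.rel R fun i => (t i : A.carrier)
  col := col

noncomputable def Target (A : CStruc σ) (U S : Set A.carrier) (φ : A.carrier → ℕ) :
    CStruc σ :=
  TargetC A U fun x => Set.indicator S φ (x : A.carrier)

end Stmt14
namespace Stmt14

variable {σ : Signature} {k : ℕ}

lemma multiFuse (M : Set ℕ) (hM : M.Finite) :
    ∀ (B C : CStruc σ) (q : B.carrier → C.carrier), UCWF σ k B →
      (∀ c ∈ M, c < k) →
      Function.Surjective q →
      (∀ x y, q x = q y ↔ (x = y ∨ (B.col x = B.col y ∧ B.col x ∈ M))) →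
      (∀ R t, C.rel R t ↔ ∃ u, (∀ i, q (u i) = t i) ∧ B.rel R u) →
      (∀ x, C.col (q x) = B.col x) → UCWF σ k C := by
  refine Set.Finite.induction_on (motive := fun M _ => ∀ (B C : CStruc σ) (q : B.carrier → C.carrier),
      UCWF σ k B → (∀ c ∈ M, c < k) → Function.Surjective q →
      (∀ x y, q x = q y ↔ (x = y ∨ (B.col x = B.col y ∧ B.col x ∈ M))) →
      (∀ R t, C.rel R t ↔ ∃ u, (∀ i, q (u i) = t i) ∧ B.rel R u) →
      (∀ x, C.col (q x) = B.col x) → UCWF σ k C) M hM ?_ ?_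
  case refine_1 =>
    intro B C q hB hMk hsurj hq hrel hcol
    have hinj : Function.Injective q := by
      intro x y hxy
      rcases (hq x y).1 hxy with h | ⟨-, h⟩
      · exact h
      · exact absurd h (Set.notMem_empty _)
    refine UCWF.iso ⟨Equiv.ofBijective q ⟨hinj, hsurj⟩, ?_, hcol⟩ hB
    intro R t
    rw [hrel]
    constructor
    · intro h
      exact ⟨t, fun i => rfl, h⟩
    · rintro ⟨u, hu, h⟩
      have : u = t := funext fun i => hinj (hu i)
      exact this ▸ h
  case refine_2 =>
    intro c M' hcM' hM' ih
    intro B C q hB hMk hsurj hq hrel hcol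
    have hck : c < k := hMk c (Set.mem_insert _ _)
    have hqsound : ∀ x y, (fuseSetoid B c).r x y → q x = q y := by
      rintro x y (rfl | ⟨h1, h2⟩)
      · rfl
      · exact (hq x y).2 (Or.inr ⟨h1.trans h2.symm, h1 ▸ Set.mem_insert _ _⟩)
    refine ih (B.fuse c) C (Quotient.lift q hqsound) (UCWF.fuse c hck hB)
      (fun d hd => hMk d (Set.mem_insert_of_mem _ hd)) ?_ ?_ ?_ ?_
    · intro z
      obtain ⟨x, rfl⟩ := hsurj z
      exact ⟨Quotient.mk _ x, rfl⟩
    · intro X Y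
      refine Quotient.inductionOn₂ X Y ?_
      intro x y
      show q x = q y ↔ _
      rw [hq]
      constructor
      · rintro (rfl | ⟨h1, h2⟩)
        · exact Or.inl rfl
        · rcases h2 with h2 | h2
          · exact Or.inl (Quotient.sound (Or.inr ⟨h2, h1 ▸ h2⟩))
          · exact Or.inr ⟨h1, h2⟩
      · rintro (h | ⟨h1, h2⟩)
        · rcases Quotient.exact h with rfl | ⟨h3, h4⟩
          · exact Or.inl rfl
          · exact Or.inr ⟨h3.trans h4.symm, h3 ▸ Set.mem_insert _ _⟩
        · exact Or.inr ⟨h1, Set.mem_insert_of_mem _ h2⟩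
    · intro R t
      rw [hrel]
      constructor
      · rintro ⟨u, hu, h⟩
        exact ⟨fun i => Quotient.mk _ (u i), hu, u, fun i => rfl, h⟩
      · rintro ⟨u, hu, v, hv, hvrel⟩
        refine ⟨v, fun i => ?_, hvrel⟩
        have : Quotient.lift q hqsound (Quotient.mk _ (v i)) = q (v i) := rfl
        rw [← this, hv i, hu i]
    · intro X
      refine Quotient.inductionOn X ?_
      intro x
      exact hcol x

end Stmt14
namespace Stmt14

variable {σ : Signature} {k : ℕ}

lemma point_ucwf (hk : 0 < k) (c : ℕ) (hc : c < k) (P : CStruc σ)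
    (hsub : ∀ a b : P.carrier, a = b) (hne : Nonempty P.carrier)
    (hrel : ∀ (R : σ.symbols) (t : Fin (σ.ar R) → P.carrier), ¬ P.rel R t)
    (hcol : ∀ a, P.col a = c) : UCWF σ k P := by
  have h0 : UCWF σ k ⟨P.carrier, P.rel, fun _ => 0⟩ :=
    UCWF.single hk ⟨P.carrier, P.rel, fun _ => 0⟩ hsub hne hrel (fun a => rfl)
  have h1 := UCWF.recolor (A := ⟨P.carrier, P.rel, fun _ => 0⟩) (fun _ => c)
    (fun i _ => hc) h0
  refine UCWF.iso (A := CStruc.recolor ⟨P.carrier, P.rel, fun _ => 0⟩ (fun _ => c))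
    (B := P) ⟨Equiv.refl _, fun R t => Iff.rfl, fun a => ?_⟩ h1
  exact hcol a

/-- Structure on `U` with only inherited nullary facts plus the facts in `F`. -/
def baseStruc (A : CStruc σ) (U : Set A.carrier) (ψ : A.carrier → ℕ)
    (F : Set ((R : σ.symbols) × (Fin (σ.ar R) → A.carrier))) : CStruc σ where
  carrier := U
  rel R t := (σ.ar R = 0 ∧ ∃ s, A.rel R s) ∨ (⟨R, fun i => (t i : A.carrier)⟩ ∈ F)
  col x := ψ (x : A.carrier)

lemma buildPoints (A : CStruc σ) (hk : 0 < k) (U : Set A.carrier) (hU : U.Finite)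
    (ψ : A.carrier → ℕ) (hψ : ∀ x ∈ U, ψ x < k) :
    UCWF σ k (baseStruc A U ψ ∅) := by
  classical
  refine Set.Finite.induction_on
    (motive := fun U _ => (∀ x ∈ U, ψ x < k) → UCWF σ k (baseStruc A U ψ ∅)) U hU ?_ ?_ hψ
  · intro _
    exact UCWF.empty _ ⟨fun x => x.2⟩
  · intro a s ha hs ih hψ'
    have hB := ih (fun x hx => hψ' x (Set.mem_insert_of_mem _ hx))
    have hP : UCWF σ k ⟨PUnit.{1}, fun _ _ => False, fun _ => ψ a⟩ :=
      point_ucwf hk (ψ a) (hψ' a (Set.mem_insert _ _)) _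
        (fun a b => rfl) ⟨⟨⟩⟩ (fun R t h => h) (fun _ => rfl)
    have hu := UCWF.union hB hP
    refine UCWF.iso ⟨(Equiv.Set.insert ha).symm, ?_, ?_⟩ hu
    · intro R t
      show _ ∨ _ ↔ (σ.ar R = 0 ∧ ∃ s, A.rel R s) ∨ _
      constructor
      · rintro (⟨s', hs', (h | h)⟩ | ⟨s', hs', h⟩)
        · exact Or.inl h
        · exact absurd h (Set.notMem_empty _)
        · exact h.elim
      · rintro (⟨har, hex⟩ | h)
        · refine Or.inl ⟨fun i => (Fin.cast har i).elim0,
            fun i => (Fin.cast har i).elim0, Or.inl ⟨har, hex⟩⟩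
        · exact absurd h (Set.notMem_empty _)
    · rintro (⟨y, hy⟩ | ⟨⟩)
      · show ψ _ = ψ y
        congr 1
      · show ψ _ = ψ a
        congr 1

lemma introFacts (A : CStruc σ) (hk : 0 < k) (U : Set A.carrier) (hU : U.Finite)
    (ψ : A.carrier → ℕ) (hψk : ∀ x ∈ U, ψ x < k) (hψinj : Set.InjOn ψ U)
    (F : Set ((R : σ.symbols) × (Fin (σ.ar R) → A.carrier))) (hF : F.Finite)
    (hFU : ∀ p ∈ F, ∀ i, p.2 i ∈ U) :
    UCWF σ k (baseStruc A U ψ F) := by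
  classical
  refine Set.Finite.induction_on
    (motive := fun F _ => (∀ p ∈ F, ∀ i, p.2 i ∈ U) → UCWF σ k (baseStruc A U ψ F)) F hF ?_ ?_ hFU
  · intro _
    exact buildPoints A hk U hU ψ hψk
  · intro p F hp hFfin ih hFU'
    obtain ⟨P1, P2⟩ := p
    have hpU : ∀ i, P2 i ∈ U := hFU' ⟨P1, P2⟩ (Set.mem_insert _ _)
    have hB := ih (fun q hq => hFU' q (Set.mem_insert_of_mem _ hq))
    have hI := UCWF.introduce (A := baseStruc A U ψ F) P1 (fun i => ψ (P2 i))
      (fun i => hψk _ (hpU i)) hB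
    refine UCWF.iso (A := (baseStruc A U ψ F).introduce P1 fun i => ψ (P2 i))
      ⟨Equiv.refl _, ?_, fun a => rfl⟩ hI
    intro R t
    have key : ∀ tt : Fin (σ.ar R) → U,
        ((∃ h : R = P1, ∀ i : Fin (σ.ar P1),
          ψ ((tt (Fin.cast (congrArg σ.ar h).symm i) : A.carrier)) = ψ (P2 i)) ↔
        ((⟨R, fun i => ((tt i : A.carrier))⟩ :
          (R : σ.symbols) × (Fin (σ.ar R) → A.carrier)) = ⟨P1, P2⟩)) := by
      intro tt
      constructor
      · rintro ⟨rfl, hcols⟩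
        have hv : ∀ i, ((tt i : A.carrier)) = P2 i := by
          intro i
          exact hψinj (tt i).2 (hpU i) (hcols i)
        exact congrArg (Sigma.mk R) (funext hv)
      · intro heq
        obtain ⟨h1, h2⟩ := Sigma.mk.inj_iff.mp heq
        subst h1
        exact ⟨rfl, fun i => congrArg ψ (congrFun (eq_of_heq h2) i)⟩
    constructor
    · rintro ((h | h) | hnew)
      · exact Or.inl h
      · exact Or.inr (Set.mem_insert_of_mem _ h)
      · exact Or.inr (by rw [Set.mem_insert_iff]; exact Or.inl ((key t).mp hnew))
    · rintro (h | hins)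
      · exact Or.inl (Or.inl h)
      · rcases Set.mem_insert_iff.mp hins with h | h
        · exact Or.inr ((key t).mpr h)
        · exact Or.inl (Or.inr h)

end Stmt14
namespace Stmt14

variable {σ : Signature} {k : ℕ}

lemma allFacts_finite (A : CStruc σ) [Finite A.carrier] (hfin : (posRel A).Finite)
    (U : Set A.carrier) :
    {p : (R : σ.symbols) × (Fin (σ.ar R) → A.carrier) |
      0 < σ.ar p.1 ∧ A.rel p.1 p.2 ∧ ∀ i, p.2 i ∈ U}.Finite := by
  have hsub : {p : (R : σ.symbols) × (Fin (σ.ar R) → A.carrier) |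
      0 < σ.ar p.1 ∧ A.rel p.1 p.2 ∧ ∀ i, p.2 i ∈ U} ⊆
      ⋃ R ∈ posRel A, Sigma.mk R '' Set.univ := by
    rintro ⟨P1, P2⟩ ⟨h1, h2, h3⟩
    exact Set.mem_biUnion ⟨h1, P2, h2⟩ ⟨P2, trivial, rfl⟩
  exact (Set.Finite.biUnion hfin (fun R _ => Set.finite_univ.image _)).subset hsub

lemma finishRecolor (A : CStruc σ) (hk : 0 < k) (U S : Set A.carrier) (hSU : S ⊆ U)
    (φ χ : A.carrier → ℕ) (hφk : ∀ s ∈ S, φ s < k)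
    (hexcl : ∀ x ∈ S, ∀ y ∈ U, χ y = χ x → y = x)
    (h : UCWF σ k (TargetC A U fun x => χ (x : A.carrier))) :
    UCWF σ k (Target A U S φ) := by
  classical
  set f : ℕ → ℕ := fun c => if h : ∃ x, x ∈ S ∧ χ x = c then φ h.choose else 0 with hfdef
  have hf : ∀ i, i < k → f i < k := by
    intro i _
    by_cases hex : ∃ x, x ∈ S ∧ χ x = i
    · simp only [hfdef, dif_pos hex]
      exact hφk _ hex.choose_spec.1
    · simp only [hfdef, dif_neg hex]
      exact hk
  have h2 := UCWF.recolor f hf h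
  have hpoint : ∀ x : (U : Set A.carrier), Set.indicator S φ x.val = f (χ x.val) := by
    intro x
    by_cases haS : x.val ∈ S
    · rw [Set.indicator_of_mem haS]
      have hex : ∃ y, y ∈ S ∧ χ y = χ x.val := ⟨x.val, haS, rfl⟩
      simp only [hfdef, dif_pos hex]
      have heq : hex.choose = x.val :=
        hexcl _ haS _ (hSU hex.choose_spec.1) hex.choose_spec.2
      rw [heq]
    · rw [Set.indicator_of_notMem haS]
      have hnex : ¬ ∃ y, y ∈ S ∧ χ y = χ x.val := by
        rintro ⟨y, hyS, hy⟩
        have : x.val = y := hexcl y hyS _ x.2 hy.symm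
        exact haS (this ▸ hyS)
      simp only [hfdef, dif_neg hnex]
  exact UCWF.iso (A := (TargetC A U fun x => χ (x : A.carrier)).recolor f)
    (B := Target A U S φ) ⟨Equiv.refl _, fun R t => Iff.rfl, fun a => hpoint a⟩ h2

lemma extendInjOn {V : Type} [Finite V] (w : ℕ) (S T : Set V) (hST : S ⊆ T)
    (hT : T.ncard ≤ w + 1) (φ : V → ℕ) (hinj : Set.InjOn φ S)
    (hrange : ∀ s ∈ S, φ s ∈ Set.Icc 1 (w + 1)) :
    ∃ ψ : V → ℕ, (∀ s ∈ S, ψ s = φ s) ∧ Set.InjOn ψ T ∧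
      ∀ s ∈ T, ψ s ∈ Set.Icc 1 (w + 1) := by
  classical
  have hmaps : φ '' S ⊆ Set.Icc 1 (w + 1) := by
    rintro _ ⟨s, hs, rfl⟩; exact hrange s hs
  have hIcc : (Set.Icc 1 (w + 1)).ncard = w + 1 := by
    rw [← Finset.coe_Icc, Set.ncard_coe_finset, Nat.card_Icc]
    omega
  have hiccfin : (Set.Icc 1 (w + 1)).Finite := by
    rw [← Finset.coe_Icc]; exact (Finset.Icc 1 (w + 1)).finite_toSet
  have hcard : (T \ S).ncard ≤ (Set.Icc 1 (w + 1) \ φ '' S).ncard := by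
    rw [Set.ncard_diff hST (Set.toFinite S), Set.ncard_diff hmaps ((Set.toFinite S).image φ),
      hIcc, Set.ncard_image_of_injOn hinj]
    have := Set.ncard_le_ncard hST (Set.toFinite T)
    omega
  have hle : (T \ S).encard ≤ (Set.Icc 1 (w + 1) \ φ '' S).encard := by
    rw [← (Set.toFinite (T \ S)).cast_ncard_eq, ← (hiccfin.diff).cast_ncard_eq]
    exact_mod_cast hcard
  obtain ⟨g, hgmem, hginj⟩ := (Set.toFinite (T \ S)).exists_injOn_of_encard_le hle
  refine ⟨fun v => if v ∈ S then φ v else if v ∈ T \ S then g v else 1,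
    fun s hs => by simp [hs], ?_, ?_⟩
  · intro x hx y hy hxy
    by_cases hxS : x ∈ S <;> by_cases hyS : y ∈ S
    · simp only [if_pos hxS, if_pos hyS] at hxy
      exact hinj hxS hyS hxy
    · have hyd : y ∈ T \ S := ⟨hy, hyS⟩
      simp only [if_pos hxS, if_neg hyS, if_pos hyd] at hxy
      have : g y ∈ Set.Icc 1 (w+1) \ φ '' S := hgmem hyd
      exact absurd ⟨x, hxS, hxy⟩ this.2
    · have hxd : x ∈ T \ S := ⟨hx, hxS⟩
      simp only [if_neg hxS, if_pos hxd, if_pos hyS] at hxy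
      have : g x ∈ Set.Icc 1 (w+1) \ φ '' S := hgmem hxd
      exact absurd ⟨y, hyS, hxy.symm⟩ this.2
    · have hxd : x ∈ T \ S := ⟨hx, hxS⟩
      have hyd : y ∈ T \ S := ⟨hy, hyS⟩
      simp only [if_neg hxS, if_neg hyS, if_pos hxd, if_pos hyd] at hxy
      exact hginj hxd hyd hxy
  · intro s hs
    by_cases hsS : s ∈ S
    · simp only [if_pos hsS]
      exact hrange s hsS
    · have hsd : s ∈ T \ S := ⟨hs, hsS⟩
      simp only [if_neg hsS, if_pos hsd]
      exact (hgmem hsd).1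

lemma baseCase (A : CStruc σ) [Finite A.carrier] (hfin : (posRel A).Finite) (w : ℕ)
    (U S : Set A.carrier) (hUcard : U.ncard ≤ w + 1) (hSU : S ⊆ U)
    (φ : A.carrier → ℕ) (hφ : ∀ s ∈ S, φ s ∈ Set.Icc 1 (w + 1)) :
    UCWF σ (w + 2) (Target A U S φ) := by
  classical
  haveI : Fintype U := (Set.toFinite U).fintype
  have hcardU : Fintype.card U = U.ncard := by
    rw [Set.ncard_eq_toFinset_card', Set.toFinset_card]
  let e := Fintype.equivFin U
  set ψ : A.carrier → ℕ := fun v => if h : v ∈ U then (e ⟨v, h⟩ : ℕ) + 1 else 0 with hψdef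
  have hψk : ∀ x ∈ U, ψ x < w + 2 := by
    intro x hx
    simp only [hψdef, dif_pos hx]
    have := (e ⟨x, hx⟩).2
    omega
  have hψinj : Set.InjOn ψ U := by
    intro x hx y hy hxy
    simp only [hψdef, dif_pos hx, dif_pos hy, Nat.add_right_cancel_iff] at hxy
    have : e ⟨x, hx⟩ = e ⟨y, hy⟩ := Fin.ext hxy
    have := e.injective this
    exact congrArg Subtype.val (by exact this)
  set allF : Set ((R : σ.symbols) × (Fin (σ.ar R) → A.carrier)) :=
    {p | 0 < σ.ar p.1 ∧ A.rel p.1 p.2 ∧ ∀ i, p.2 i ∈ U} with hallF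
  have hB := introFacts A (by omega) U (Set.toFinite U) ψ hψk hψinj allF
    (allFacts_finite A hfin U) (fun p hp => hp.2.2)
  have hiso : UCWF σ (w + 2) (TargetC A U fun x => ψ (x : A.carrier)) := by
    refine UCWF.iso (A := baseStruc A U ψ allF) ⟨Equiv.refl _, ?_, fun a => rfl⟩ hB
    intro R t
    have hsub : ∀ (f g : Fin (σ.ar R) → A.carrier), σ.ar R = 0 → f = g :=
      fun f g h0 => funext fun i => absurd i.isLt (by omega)
    constructor
    · rintro (⟨har, s, hs⟩ | hmem)
      · have := (hsub s (fun i => Subtype.val (t i)) har) ▸ hs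
        exact this
      · exact hmem.2.1
    · intro h
      rcases Nat.eq_zero_or_pos (σ.ar R) with har | har
      · exact Or.inl ⟨har, _, h⟩
      · exact Or.inr ⟨har, h, fun i => Subtype.prop (t i)⟩
  refine finishRecolor A (by omega) U S hSU φ ψ (fun s hs => ?_) ?_ hiso
  · have := hφ s hs
    simp only [Set.mem_Icc] at this
    omega
  · intro x hxS y hyU hxy
    exact hψinj hyU (hSU hxS) hxy

end Stmt14
namespace Stmt14

open SimpleGraph

section Tree

variable {ι : Type} {T : SimpleGraph ι} {i₀ i₁ : ι}

lemma side_cover (hT : T.IsTree) (i₀ i₁ j : ι) :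
    (T.deleteEdges {s(i₀, i₁)}).Reachable j i₀ ∨
    (T.deleteEdges {s(i₀, i₁)}).Reachable j i₁ := by
  have main : ∀ {a b : ι} (_ : T.Walk a b),
      (T.deleteEdges {s(i₀, i₁)}).Reachable a b ∨
      (T.deleteEdges {s(i₀, i₁)}).Reachable a i₀ ∨
      (T.deleteEdges {s(i₀, i₁)}).Reachable a i₁ := by
    intro a b W
    induction W with
    | nil => exact Or.inl (Reachable.refl _)
    | @cons u v w h W ih =>
      by_cases he : s(u, v) = s(i₀, i₁)
      · rcases Sym2.eq_iff.mp he with ⟨hu, -⟩ | ⟨hu, -⟩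
        · exact Or.inr (Or.inl (by rw [hu]))
        · exact Or.inr (Or.inr (by rw [hu]))
      · have hadj' : (T.deleteEdges {s(i₀, i₁)}).Adj u v :=
          SimpleGraph.deleteEdges_adj.mpr ⟨h, by simpa using he⟩
        rcases ih with h1 | h1 | h1
        · exact Or.inl (hadj'.reachable.trans h1)
        · exact Or.inr (Or.inl (hadj'.reachable.trans h1))
        · exact Or.inr (Or.inr (hadj'.reachable.trans h1))
  obtain ⟨W⟩ := hT.isConnected.preconnected j i₀
  rcases main W with h | h | h
  · exact Or.inl h
  · exact Or.inl h
  · exact Or.inr h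

lemma side_disjoint (hT : T.IsTree) (hadj : T.Adj i₀ i₁) :
    ¬ (T.deleteEdges {s(i₀, i₁)}).Reachable i₀ i₁ := by
  rintro ⟨W⟩
  set P0 := W.toPath with hP0
  have hedges : ∀ e ∈ (P0 : (T.deleteEdges {s(i₀, i₁)}).Walk i₀ i₁).edges, e ∈ T.edgeSet := by
    intro e he
    have := Walk.edges_subset_edgeSet _ he
    rw [SimpleGraph.edgeSet_deleteEdges] at this
    exact this.1
  have hnotmem : s(i₀, i₁) ∉ (P0 : (T.deleteEdges {s(i₀, i₁)}).Walk i₀ i₁).edges := by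
    intro hmem
    have := Walk.edges_subset_edgeSet _ hmem
    rw [SimpleGraph.edgeSet_deleteEdges] at this
    exact this.2 rfl
  set P : T.Walk i₀ i₁ := ((P0 : (T.deleteEdges {s(i₀, i₁)}).Walk i₀ i₁)).transfer T hedges
    with hPdef
  have hP : P.IsPath := (P0.2).transfer _
  have hsingle : (SimpleGraph.Path.singleton hadj : T.Walk i₀ i₁).IsPath :=
    (SimpleGraph.Path.singleton hadj).2
  have huniq := hT.existsUnique_path i₀ i₁
  have heq : P = (SimpleGraph.Path.singleton hadj : T.Walk i₀ i₁) :=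
    (huniq.unique hP hsingle)
  have hmem : s(i₀, i₁) ∈ P.edges := by
    rw [heq]
    simp [SimpleGraph.Path.singleton]
  rw [hPdef, Walk.edges_transfer] at hmem
  exact hnotmem hmem

lemma walk_cross (hT : T.IsTree) (hadj : T.Adj i₀ i₁) {a b : ι} (W : T.Walk a b) :
    (T.deleteEdges {s(i₀, i₁)}).Reachable a i₀ →
    (T.deleteEdges {s(i₀, i₁)}).Reachable b i₁ →
    i₀ ∈ W.support ∧ i₁ ∈ W.support := by
  induction W with
  | nil =>
    intro ha hb
    exact absurd (ha.symm.trans hb) (side_disjoint hT hadj)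
  | @cons u v w h W ih =>
    intro ha hb
    by_cases he : s(u, v) = s(i₀, i₁)
    · rcases Sym2.eq_iff.mp he with ⟨hu, hv⟩ | ⟨hu, hv⟩
      · subst hu; subst hv
        constructor
        · exact Walk.start_mem_support _
        · rw [Walk.support_cons]
          exact List.mem_cons_of_mem _ (Walk.start_mem_support W)
      · exfalso
        subst hu
        exact side_disjoint hT hadj (ha.symm)
    · have hadj' : (T.deleteEdges {s(i₀, i₁)}).Adj u v :=
        SimpleGraph.deleteEdges_adj.mpr ⟨h, by simpa using he⟩
      have ha' : (T.deleteEdges {s(i₀, i₁)}).Reachable v i₀ :=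
        hadj'.symm.reachable.trans ha
      obtain ⟨h1, h2⟩ := ih ha' hb
      rw [Walk.support_cons]
      exact ⟨List.mem_cons_of_mem _ h1, List.mem_cons_of_mem _ h2⟩

lemma dist_through (hT : T.IsTree) (hadj : T.Adj i₀ i₁) {j : ι}
    (hj : (T.deleteEdges {s(i₀, i₁)}).Reachable j i₁) : T.dist i₁ j < T.dist i₀ j := by
  have hr : T.Reachable i₀ j := hT.isConnected.preconnected i₀ j
  obtain ⟨W, hW⟩ := hr.exists_walk_length_eq_dist
  obtain ⟨-, hmem⟩ := walk_cross hT hadj W (Reachable.refl _) hj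
  have hdrop : T.dist i₁ j ≤ (W.dropUntil i₁ hmem).length := SimpleGraph.dist_le _
  have htake : 1 ≤ (W.takeUntil i₁ hmem).length := by
    by_contra hlt
    push_neg at hlt
    interval_cases h : (W.takeUntil i₁ hmem).length
    · exact hadj.ne (Walk.eq_of_length_eq_zero h)
  have hsplit : (W.takeUntil i₁ hmem).length + (W.dropUntil i₁ hmem).length = W.length := by
    rw [← Walk.length_append, Walk.take_spec]
  omega

lemma induce_walk {S : Set ι} (h : (T.induce S).Connected) {a b : ι}
    (ha : a ∈ S) (hb : b ∈ S) :
    ∃ W : T.Walk a b, ∀ x ∈ W.support, x ∈ S := by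
  obtain ⟨W'⟩ := h.preconnected ⟨a, ha⟩ ⟨b, hb⟩
  refine ⟨W'.map (⟨Subtype.val, fun hadj => hadj⟩ : T.induce S →g T), ?_⟩
  intro x hx
  rw [Walk.support_map, List.mem_map] at hx
  obtain ⟨y, hy, rfl⟩ := hx
  exact y.2

end Tree

end Stmt14
namespace Stmt14

open SimpleGraph

section Main

variable {V ι : Type} {G : SimpleGraph V} {T : SimpleGraph ι}

/-- Distance from a tree node to the subtree of bags containing `v`. -/
noncomputable def sID (D : TreeDecomp G T) (v : V) (i : ι) : ℕ :=
  sInf ((fun j => T.dist i j) '' {j | v ∈ D.bag j})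

lemma sID_nonempty (D : TreeDecomp G T) (v : V) (i : ι) :
    ((fun j => T.dist i j) '' {j | v ∈ D.bag j}).Nonempty := by
  obtain ⟨j, hj⟩ := D.mem_bag v
  exact ⟨T.dist i j, j, hj, rfl⟩

lemma sID_le (D : TreeDecomp G T) {v : V} {j : ι} (h : v ∈ D.bag j) (i : ι) :
    sID D v i ≤ T.dist i j :=
  Nat.sInf_le ⟨j, h, rfl⟩

lemma sID_exists (D : TreeDecomp G T) (v : V) (i : ι) :
    ∃ j, v ∈ D.bag j ∧ T.dist i j = sID D v i := by
  obtain ⟨j, hj, hd⟩ := Nat.sInf_mem (sID_nonempty D v i)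
  exact ⟨j, hj, hd⟩

lemma sID_pos (hT : T.IsTree) (D : TreeDecomp G T) {v : V} {i₀ : ι}
    (h : v ∉ D.bag i₀) : 0 < sID D v i₀ := by
  rcases Nat.eq_zero_or_pos (sID D v i₀) with h0 | h0
  · exfalso
    obtain ⟨j, hj, hd⟩ := sID_exists D v i₀
    rw [h0] at hd
    have : i₀ = j := hT.isConnected.dist_eq_zero_iff.mp hd
    exact h (this ▸ hj)
  · exact h0

lemma sID_step (hT : T.IsTree) {i₀ i₁ : ι} (hadj : T.Adj i₀ i₁) (D : TreeDecomp G T)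
    {v : V} (hv : ∃ j, (T.deleteEdges {s(i₀, i₁)}).Reachable j i₁ ∧ v ∈ D.bag j) :
    sID D v i₁ ≤ sID D v i₀ ∧ (v ∉ D.bag i₀ → sID D v i₁ < sID D v i₀) := by
  by_cases hmem : v ∈ D.bag i₁
  · have h1 : sID D v i₁ ≤ 0 := by
      have h2 := sID_le D hmem i₁
      rwa [SimpleGraph.dist_self] at h2
    constructor
    · omega
    · intro h
      have := sID_pos hT D h
      omega
  · have hall : ∀ j, v ∈ D.bag j → (T.deleteEdges {s(i₀, i₁)}).Reachable j i₁ := by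
      intro j hj
      rcases side_cover hT i₀ i₁ j with h0 | h1
      · exfalso
        obtain ⟨j₁, hr₁, hb₁⟩ := hv
        obtain ⟨W, hWsup⟩ := induce_walk (D.subtree v) hj hb₁
        obtain ⟨-, hi₁⟩ := walk_cross hT hadj W h0 hr₁
        exact hmem (hWsup _ hi₁)
      · exact h1
    obtain ⟨js, hjs, hds⟩ := sID_exists D v i₀
    have hlt : T.dist i₁ js < T.dist i₀ js := dist_through hT hadj (hall _ hjs)
    have hle := sID_le D hjs i₁
    exact ⟨by omega, fun _ => by omega⟩

/-- Sum of subtree distances over a finite set of vertices. -/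
noncomputable def DD [Finite V] (D : TreeDecomp G T) (U : Set V) (i : ι) : ℕ :=
  ∑ v ∈ (Set.toFinite U).toFinset, sID D v i

end Main

section KeyTheorem

variable {σ : Signature}

theorem keyStep (A : CStruc σ) [Finite A.carrier] (hfin : (posRel A).Finite)
    {ι : Type} {T : SimpleGraph ι} (hT : T.IsTree) (D : TreeDecomp A.gaifman T)
    (w : ℕ) (hbag : ∀ i, (D.bag i).ncard ≤ w + 1) :
    ∀ n m (U : Set A.carrier) (i₀ : ι) (S : Set A.carrier) (φ : A.carrier → ℕ),
      U.ncard ≤ n → DD D U i₀ ≤ m → S ⊆ D.bag i₀ → S ⊆ U →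
      Set.InjOn φ S → (∀ s ∈ S, φ s ∈ Set.Icc 1 (w + 1)) →
      UCWF σ (w + 2) (Target A U S φ) := by
  classical
  intro n
  induction n using Nat.strong_induction_on with
  | _ n IHn =>
  intro m
  induction m using Nat.strong_induction_on with
  | _ m IHm =>
  intro U i₀ S φ hn hm hSbag hSU hinj hrange
  by_cases hUb : U ⊆ D.bag i₀
  · exact baseCase A hfin w U S
      ((Set.ncard_le_ncard hUb (Set.toFinite _)).trans (hbag i₀)) hSU φ hrange
  · obtain ⟨ustar, hustarU, hustar0⟩ := Set.not_subset.mp hUb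
    obtain ⟨jstar, hjstar⟩ := D.mem_bag ustar
    have hne : i₀ ≠ jstar := fun h => hustar0 (h ▸ hjstar)
    -- find the neighbour i₁ of i₀ in the direction of jstar
    obtain ⟨Wp⟩ := hT.isConnected.preconnected i₀ jstar
    have hPp : (Wp.toPath : T.Walk i₀ jstar).IsPath := Wp.toPath.2
    obtain ⟨i₁, hadj, rest, hrestedges, hreach⟩ :
        ∃ (i₁ : ι) (hadj : T.Adj i₀ i₁) (rest : T.Walk i₁ jstar),
          s(i₀, i₁) ∉ rest.edges ∧
          (T.deleteEdges {s(i₀, i₁)}).Reachable i₁ jstar := by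
      cases hWp : (Wp.toPath : T.Walk i₀ jstar) with
      | nil => exact absurd rfl hne
      | @cons _ i₁' _ hadj rest =>
        rw [hWp] at hPp
        have hnodup := hPp.edges_nodup
        rw [Walk.edges_cons] at hnodup
        have hnotin : s(i₀, i₁') ∉ rest.edges := (List.nodup_cons.mp hnodup).1
        refine ⟨i₁', hadj, rest, hnotin, ?_⟩
        have hsub : ∀ e ∈ rest.edges, e ∈ (T.deleteEdges {s(i₀, i₁')}).edgeSet := by
          intro e he
          rw [SimpleGraph.edgeSet_deleteEdges]
          refine ⟨Walk.edges_subset_edgeSet rest he, ?_⟩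
          intro hmem
          rw [Set.mem_singleton_iff] at hmem
          exact hnotin (hmem ▸ he)
        exact ⟨rest.transfer _ hsub⟩
    set Gd := T.deleteEdges {s(i₀, i₁)} with hGd
    set U₀ : Set A.carrier := {v | v ∈ U ∧ ∃ j, Gd.Reachable j i₀ ∧ v ∈ D.bag j} with hU₀def
    set U₁ : Set A.carrier := {v | v ∈ U ∧ ∃ j, Gd.Reachable j i₁ ∧ v ∈ D.bag j} with hU₁def
    have hU₀sub : U₀ ⊆ U := fun v hv => hv.1
    have hU₁sub : U₁ ⊆ U := fun v hv => hv.1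
    have hcover : ∀ v ∈ U, v ∈ U₀ ∨ v ∈ U₁ := by
      intro v hv
      obtain ⟨j, hj⟩ := D.mem_bag v
      rcases side_cover hT i₀ i₁ j with h | h
      · exact Or.inl ⟨hv, j, h, hj⟩
      · exact Or.inr ⟨hv, j, h, hj⟩
    have hIcross : ∀ v, v ∈ U₀ → v ∈ U₁ → v ∈ D.bag i₀ ∧ v ∈ D.bag i₁ := by
      rintro v ⟨-, j₀, hr₀, hb₀⟩ ⟨-, j₁, hr₁, hb₁⟩
      obtain ⟨W, hWsup⟩ := induce_walk (D.subtree v) hb₀ hb₁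
      obtain ⟨h0, h1⟩ := walk_cross hT hadj W hr₀ hr₁
      exact ⟨hWsup _ h0, hWsup _ h1⟩
    have hSU₀ : S ⊆ U₀ := fun s hs => ⟨hSU hs, i₀, Reachable.refl _, hSbag hs⟩
    have hustar₁ : ustar ∈ U₁ := ⟨hustarU, jstar, hreach.symm, hjstar⟩
    have hustar₀ : ustar ∉ U₀ := by
      intro h
      exact hustar0 (hIcross ustar h hustar₁).1
    set SI : Set A.carrier := {v | v ∈ U ∧ v ∈ D.bag i₀ ∧ v ∈ D.bag i₁} with hSIdef
    have hSI₀ : SI ⊆ U₀ := fun v hv => ⟨hv.1, i₀, Reachable.refl _, hv.2.1⟩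
    have hSI₁ : SI ⊆ U₁ := fun v hv => ⟨hv.1, i₁, Reachable.refl _, hv.2.2⟩
    have hU₀₁ : ∀ v, v ∈ U₀ → v ∈ U₁ → v ∈ SI :=
      fun v h0 h1 => ⟨h0.1, hIcross v h0 h1⟩
    by_cases hdeg : U₁ = U
    · -- degenerate case: move the root to i₁
      have hSbag1 : S ⊆ D.bag i₁ := by
        intro s hs
        have hsU₁ : s ∈ U₁ := hdeg ▸ hSU hs
        have hsU₀ : s ∈ U₀ := ⟨hSU hs, i₀, Reachable.refl _, hSbag hs⟩
        exact (hIcross s hsU₀ hsU₁).2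
      have hDDlt : DD D U i₁ < DD D U i₀ := by
        refine Finset.sum_lt_sum (fun v hv => ?_) ⟨ustar, ?_, ?_⟩
        · rw [Set.Finite.mem_toFinset] at hv
          have hv₁ : v ∈ U₁ := hdeg ▸ hv
          exact (sID_step hT hadj D hv₁.2).1
        · rw [Set.Finite.mem_toFinset]
          exact hustarU
        · exact (sID_step hT hadj D hustar₁.2).2 hustar0
      exact IHm (DD D U i₁) (by omega) U i₁ S φ hn le_rfl hSbag1 hSU hinj hrange
    · -- split case
      have hU₁ssub : U₁ ⊂ U := ssubset_of_subset_of_ne hU₁sub hdeg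
      have hU₀ssub : U₀ ⊂ U := ⟨hU₀sub, fun h => hustar₀ (h hustarU)⟩
      set Sstar : Set A.carrier := S ∪ SI with hSstardef
      have hSstarbag : Sstar ⊆ D.bag i₀ := by
        rintro v (hv | hv)
        · exact hSbag hv
        · exact hv.2.1
      have hSstarU₀ : Sstar ⊆ U₀ := by
        rintro v (hv | hv)
        · exact hSU₀ hv
        · exact hSI₀ hv
      obtain ⟨φs, hφsS, hφsinj, hφsrange⟩ := extendInjOn w S Sstar Set.subset_union_left
        ((Set.ncard_le_ncard hSstarbag (Set.toFinite _)).trans (hbag i₀)) φ hinj hrange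
      have hB₀ := IHn U₀.ncard
        (lt_of_lt_of_le (Set.ncard_lt_ncard hU₀ssub (Set.toFinite U)) hn)
        (DD D U₀ i₀) U₀ i₀ Sstar φs le_rfl le_rfl hSstarbag hSstarU₀ hφsinj hφsrange
      have hSIbag1 : SI ⊆ D.bag i₁ := fun v hv => hv.2.2
      have hB₁ := IHn U₁.ncard
        (lt_of_lt_of_le (Set.ncard_lt_ncard hU₁ssub (Set.toFinite U)) hn)
        (DD D U₁ i₁) U₁ i₁ SI φs le_rfl le_rfl hSIbag1 hSI₁
        (hφsinj.mono (fun v hv => Set.mem_union_right _ hv))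
        (fun s hs => hφsrange s (Set.mem_union_right _ hs))
      have hun := UCWF.union hB₀ hB₁
      -- now fuse the two copies along SI
      set M : Set ℕ := φs '' SI with hMdef
      have hMfin : M.Finite := ((Set.toFinite SI).image φs)
      have hMk : ∀ c ∈ M, c < w + 2 := by
        rintro c ⟨s, hs, rfl⟩
        have := hφsrange s (Set.mem_union_right _ hs)
        simp only [Set.mem_Icc] at this
        omega
      have hMpos : ∀ c ∈ M, 1 ≤ c := by
        rintro c ⟨s, hs, rfl⟩
        exact (hφsrange s (Set.mem_union_right _ hs)).1
      have hdec : ∀ (W : Set A.carrier), W ⊆ Sstar → ∀ z : A.carrier,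
          Set.indicator W φs z ∈ M → z ∈ W ∧ φs z = Set.indicator W φs z := by
        intro W hW z hz
        by_cases hzW : z ∈ W
        · exact ⟨hzW, (Set.indicator_of_mem hzW _).symm⟩
        · rw [Set.indicator_of_notMem hzW] at hz
          exact absurd (hMpos 0 hz) (by omega)
      -- the fused structure
      have hC : UCWF σ (w + 2) (TargetC A U fun x => Set.indicator Sstar φs x.val) := by
        refine multiFuse M hMfin ((Target A U₀ Sstar φs).union (Target A U₁ SI φs))
          (TargetC A U fun x => Set.indicator Sstar φs x.val)
          (Sum.elim (Set.inclusion hU₀sub) (Set.inclusion hU₁sub)) hun hMk ?_ ?_ ?_ ?_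
        · -- surjective
          rintro ⟨xv, hx⟩
          rcases hcover xv hx with h | h
          · exact ⟨Sum.inl ⟨xv, h⟩, Subtype.ext rfl⟩
          · exact ⟨Sum.inr ⟨xv, h⟩, Subtype.ext rfl⟩
        · -- quotient description
          rintro (⟨av, hav⟩ | ⟨av, hav⟩) (⟨bv, hbv⟩ | ⟨bv, hbv⟩)
          · constructor
            · intro h
              have hvv : av = bv := congrArg Subtype.val h
              subst hvv
              exact Or.inl rfl
            · rintro (h | ⟨h1, h2⟩)
              · rw [h]
              · have h1' : Set.indicator Sstar φs av = Set.indicator Sstar φs bv := h1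
                have h2' : Set.indicator Sstar φs av ∈ M := h2
                obtain ⟨ha, hφa⟩ := hdec Sstar (fun z hz => hz) av h2'
                obtain ⟨hb, hφb⟩ := hdec Sstar (fun z hz => hz) bv (h1' ▸ h2')
                have hvv : av = bv := hφsinj ha hb (by rw [hφa, hφb, h1'])
                exact Subtype.ext (show av = bv from hvv)
          · constructor
            · intro h
              have hvv : av = bv := congrArg Subtype.val h
              have hSIa : av ∈ SI := hU₀₁ _ hav (by rw [hvv]; exact hbv)
              have hSsa : av ∈ Sstar := Set.mem_union_right _ hSIa
              refine Or.inr ⟨?_, ?_⟩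
              · show Set.indicator Sstar φs av = Set.indicator SI φs bv
                rw [Set.indicator_of_mem hSsa, ← hvv, Set.indicator_of_mem hSIa]
              · show Set.indicator Sstar φs av ∈ M
                rw [Set.indicator_of_mem hSsa]
                exact ⟨av, hSIa, rfl⟩
            · rintro (h | ⟨h1, h2⟩)
              · exact absurd h (by simp)
              · have h1' : Set.indicator Sstar φs av = Set.indicator SI φs bv := h1
                have h2' : Set.indicator Sstar φs av ∈ M := h2
                obtain ⟨ha, hφa⟩ := hdec Sstar (fun z hz => hz) av h2'
                obtain ⟨hb, hφb⟩ :=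
                  hdec SI (fun z hz => Set.mem_union_right _ hz) bv (h1' ▸ h2')
                have hvv : av = bv := hφsinj ha (Set.mem_union_right _ hb)
                  (by rw [hφa, hφb, h1'])
                exact Subtype.ext (show av = bv from hvv)
          · constructor
            · intro h
              have hvv : av = bv := congrArg Subtype.val h
              have hSIb : bv ∈ SI := hU₀₁ _ hbv (by rw [← hvv]; exact hav)
              have hSIa : av ∈ SI := by rw [hvv]; exact hSIb
              refine Or.inr ⟨?_, ?_⟩
              · show Set.indicator SI φs av = Set.indicator Sstar φs bv
                rw [Set.indicator_of_mem hSIa,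
                  Set.indicator_of_mem (Set.mem_union_right S hSIb), hvv]
              · show Set.indicator SI φs av ∈ M
                rw [Set.indicator_of_mem hSIa]
                exact ⟨av, hSIa, rfl⟩
            · rintro (h | ⟨h1, h2⟩)
              · exact absurd h (by simp)
              · have h1' : Set.indicator SI φs av = Set.indicator Sstar φs bv := h1
                have h2' : Set.indicator SI φs av ∈ M := h2
                obtain ⟨ha, hφa⟩ := hdec SI (fun z hz => Set.mem_union_right _ hz) av h2'
                obtain ⟨hb, hφb⟩ := hdec Sstar (fun z hz => hz) bv (h1' ▸ h2')
                have hvv : av = bv := hφsinj (Set.mem_union_right _ ha) hb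
                  (by rw [hφa, hφb, h1'])
                exact Subtype.ext (show av = bv from hvv)
          · constructor
            · intro h
              have hvv : av = bv := congrArg Subtype.val h
              subst hvv
              exact Or.inl rfl
            · rintro (h | ⟨h1, h2⟩)
              · rw [h]
              · have h1' : Set.indicator SI φs av = Set.indicator SI φs bv := h1
                have h2' : Set.indicator SI φs av ∈ M := h2
                obtain ⟨ha, hφa⟩ := hdec SI (fun z hz => Set.mem_union_right _ hz) av h2'
                obtain ⟨hb, hφb⟩ :=
                  hdec SI (fun z hz => Set.mem_union_right _ hz) bv (h1' ▸ h2')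
                have hvv : av = bv := hφsinj (Set.mem_union_right _ ha)
                  (Set.mem_union_right _ hb) (by rw [hφa, hφb, h1'])
                exact Subtype.ext (show av = bv from hvv)
        · -- relations
          intro R t
          let t' : Fin (σ.ar R) → (U : Set A.carrier) := t
          constructor
          · intro h
            have h' : A.rel R fun i => (t' i).val := h
            have hsplit : (∀ i, (t' i).val ∈ U₀) ∨ (∀ i, (t' i).val ∈ U₁) := by
              by_cases hall : ∀ i, (t' i).val ∈ U₀
              · exact Or.inl hall
              · push_neg at hall
                obtain ⟨i0, hi0⟩ := hall
                have hi0' : (t' i0).val ∈ U₁ := (hcover _ (t' i0).2).resolve_left hi0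
                refine Or.inr fun j => ?_
                by_cases hj : (t' j).val ∈ U₁
                · exact hj
                · exfalso
                  have hj0 : (t' j).val ∈ U₀ := (hcover _ (t' j).2).resolve_right hj
                  have hne' : (t' j).val ≠ (t' i0).val := by
                    intro heq
                    exact hi0 (heq ▸ hj0)
                  have hgadj : A.gaifman.Adj (t' j).val (t' i0).val :=
                    ⟨hne', R, fun i => (t' i).val, h', ⟨j, rfl⟩, ⟨i0, rfl⟩⟩
                  obtain ⟨jb, hjb1, hjb2⟩ := D.mem_edge _ _ hgadj
                  rcases side_cover hT i₀ i₁ jb with hs | hs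
                  · exact hi0 ⟨(t' i0).2, jb, hs, hjb2⟩
                  · exact hj ⟨(t' j).2, jb, hs, hjb1⟩
            rcases hsplit with hall | hall
            · exact ⟨fun i => Sum.inl ⟨(t' i).val, hall i⟩, fun i => Subtype.ext rfl,
                Or.inl ⟨fun i => ⟨(t' i).val, hall i⟩, fun i => rfl, h'⟩⟩
            · exact ⟨fun i => Sum.inr ⟨(t' i).val, hall i⟩, fun i => Subtype.ext rfl,
                Or.inr ⟨fun i => ⟨(t' i).val, hall i⟩, fun i => rfl, h'⟩⟩
          · rintro ⟨u, hu, (⟨s, hs, hrel'⟩ | ⟨s, hs, hrel'⟩)⟩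
            · have hts : ∀ i, Subtype.val (t i) = Subtype.val (s i) := by
                intro i
                rw [← hu i, hs i]
                rfl
              have heq : (fun i => Subtype.val (s i)) = fun i => Subtype.val (t i) :=
                funext fun i => (hts i).symm
              exact show A.rel R fun i => Subtype.val (t i) from heq ▸ hrel'
            · have hts : ∀ i, Subtype.val (t i) = Subtype.val (s i) := by
                intro i
                rw [← hu i, hs i]
                rfl
              have heq : (fun i => Subtype.val (s i)) = fun i => Subtype.val (t i) :=
                funext fun i => (hts i).symm
              exact show A.rel R fun i => Subtype.val (t i) from heq ▸ hrel'
        · -- colours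
          rintro (⟨av, hav⟩ | ⟨av, hav⟩)
          · rfl
          · show Set.indicator Sstar φs av = Set.indicator SI φs av
            by_cases haSI : av ∈ SI
            · rw [Set.indicator_of_mem haSI,
                Set.indicator_of_mem (Set.mem_union_right S haSI)]
            · have haSs : av ∉ Sstar := by
                rintro (h | h)
                · exact haSI (hU₀₁ _ (hSU₀ h) hav)
                · exact haSI h
              rw [Set.indicator_of_notMem haSI, Set.indicator_of_notMem haSs]
      -- final recolouring
      refine finishRecolor A (by omega) U S hSU φ (Set.indicator Sstar φs)
        (fun s hs => ?_) ?_ hC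
      · have := hrange s hs
        simp only [Set.mem_Icc] at this
        omega
      · intro x hxS y hyU hxy
        have hxSs : x ∈ Sstar := Set.mem_union_left _ hxS
        rw [Set.indicator_of_mem hxSs] at hxy
        by_cases hySs : y ∈ Sstar
        · rw [Set.indicator_of_mem hySs] at hxy
          exact hφsinj hySs hxSs hxy
        · rw [Set.indicator_of_notMem hySs] at hxy
          have := (hφsrange x hxSs).1
          omega

end KeyTheorem

end Stmt14
/-- every (finite) relational structure satisfies
ucwf(A) ≤ tw(G_A) + 2. -/
theorem stmt14 {σ : Signature} (A : CStruc σ) [Finite A.carrier]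
    (h0 : ∀ a, A.col a = 0) :
    ucwf A ≤ tw A.gaifman + 2 := by
  classical
  by_cases hfin : (Stmt14.posRel A).Finite
  · have hne : {w | twLe A.gaifman w}.Nonempty := by
      refine ⟨Nat.card A.carrier, ?_⟩
      simp only [Set.mem_setOf_eq]
      exact Stmt14.twLe_card A.gaifman
    have htw : twLe A.gaifman (tw A.gaifman) := Nat.sInf_mem hne
    obtain ⟨ι, T, hT, D, hbag⟩ := htw
    haveI : Nonempty ι := hT.isConnected.nonempty
    have i₀ : ι := Classical.arbitrary ι
    have hkey := Stmt14.keyStep A hfin hT D (tw A.gaifman) hbag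
      (Set.univ : Set A.carrier).ncard (Stmt14.DD D Set.univ i₀) Set.univ i₀ ∅
      (fun _ => 0) le_rfl le_rfl (Set.empty_subset _) (Set.empty_subset _)
      (fun x hx => absurd hx (Set.notMem_empty _))
      (fun s hs => absurd hs (Set.notMem_empty _))
    have hA : UCWF σ (tw A.gaifman + 2) A := by
      refine UCWF.iso ⟨Equiv.Set.univ A.carrier, fun R t => Iff.rfl, fun a => ?_⟩ hkey
      rw [h0]
      exact (Set.indicator_of_notMem (s := (∅ : Set A.carrier))
        (Set.notMem_empty (Subtype.val a)) (fun _ => (0 : ℕ))).symm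
    exact Nat.sInf_le hA
  · have hempty : {k | UCWF σ k A} = ∅ := by
      ext k
      simp only [Set.mem_setOf_eq, Set.mem_empty_iff_false, iff_false]
      intro h
      exact hfin (Stmt14.posRel_finite h)
    rw [ucwf, hempty, Nat.sInf_empty]
    omega
end
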